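/- arXiv:2603.15792 — 6 statements merged into one kernel-verified Lean document; each statement's English description precedes it below -/
import Mathlib

section
/- Let D and T be finite types, (ψ_t)_{t∈T} an orthonormal family of vectors in ℂ^D, and β : T × T → ℂ such that the matrix ρ = ∑_{i,j∈T} β(i,j)·ψ_i ψ_j^* (where ψ_i ψ_j^* denotes the rank-one matrix with entries ψ_i(a)·conj(ψ_j(a'))) is a density matrix. Define ρ̃ = ∑_{t∈T} β(t,t)·ψ_t ψ_t^*. Then |T|·ρ̃ − ρ is positive semidefinite. -/
open Matrix BigOperators
open scoped Classical ComplexOrder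

noncomputable section

/-- A density matrix: positive semidefinite with unit trace. -/
def IsDensity {X : Type} [Fintype X] [DecidableEq X] (M : Matrix X X ℂ) : Prop :=
  M.PosSemidef ∧ M.trace = 1

/-- The rank-one matrix `|v⟩⟨w|`. -/
def outer {X : Type} (v w : X → ℂ) : Matrix X X ℂ :=
  fun x x' => v x * (starRingEnd ℂ) (w x')

lemma outer_qf {X : Type} [Fintype X] (v w x : X → ℂ) :
    star x ⬝ᵥ (outer v w *ᵥ x)
      = (starRingEnd ℂ) (∑ a, (starRingEnd ℂ) (v a) * x a) * ∑ a, (starRingEnd ℂ) (w a) * x a := by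
  simp only [dotProduct, mulVec, outer, Pi.star_apply, map_sum, _root_.map_mul, RingHom.id_apply,
    Complex.conj_conj, RCLike.star_def]
  rw [Finset.sum_mul_sum]
  refine Finset.sum_congr rfl fun a _ => ?_
  rw [Finset.mul_sum]
  exact Finset.sum_congr rfl fun b _ => by ring

lemma outer_ct {X : Type} (v w : X → ℂ) : (outer v w)ᴴ = outer w v := by
  ext a b
  simp [outer, conjTranspose_apply, mul_comm]

lemma qf_sum {D ι : Type} [Fintype D] (s : Finset ι) (M : ι → Matrix D D ℂ) (x : D → ℂ) :
    star x ⬝ᵥ ((∑ i ∈ s, M i) *ᵥ x) = ∑ i ∈ s, star x ⬝ᵥ (M i *ᵥ x) := by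
  induction s using Finset.induction_on with
  | empty => simp
  | insert _ _ h ih => rw [Finset.sum_insert h, Finset.sum_insert h, Matrix.add_mulVec,
      dotProduct_add, ih]

lemma qf_smul {D : Type} [Fintype D] (a : ℂ) (M : Matrix D D ℂ) (x : D → ℂ) :
    star x ⬝ᵥ ((a • M) *ᵥ x) = a * (star x ⬝ᵥ (M *ᵥ x)) := by
  rw [Matrix.smul_mulVec, dotProduct_smul, smul_eq_mul]

lemma roots_sum (n : ℕ) (hn : 0 < n) (p q : Fin n) :
    ∑ k : Fin n, Complex.exp (2 * Real.pi * Complex.I * ((k : ℕ) * (p : ℕ)) / n) *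
      (starRingEnd ℂ) (Complex.exp (2 * Real.pi * Complex.I * ((k : ℕ) * (q : ℕ)) / n))
      = if p = q then (n : ℂ) else 0 := by
  have hn' : (n : ℂ) ≠ 0 := Nat.cast_ne_zero.2 hn.ne'
  set d : ℤ := (p : ℤ) - (q : ℤ) with hd
  set ζ : ℂ := Complex.exp (2 * Real.pi * Complex.I * d / n) with hζ
  have hterm : ∀ k : Fin n,
      Complex.exp (2 * Real.pi * Complex.I * ((k : ℕ) * (p : ℕ)) / n) *
        (starRingEnd ℂ) (Complex.exp (2 * Real.pi * Complex.I * ((k : ℕ) * (q : ℕ)) / n))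
        = ζ ^ (k : ℕ) := by
    intro k
    rw [hζ, ← Complex.exp_nat_mul, ← Complex.exp_conj, ← Complex.exp_add]
    congr 1
    have hc : (starRingEnd ℂ) (2 * (Real.pi : ℂ) * Complex.I * ((k : ℕ) * (q : ℕ)) / n)
        = -(2 * (Real.pi : ℂ) * Complex.I * ((k : ℕ) * (q : ℕ)) / n) := by
      have he : (2 * (Real.pi : ℂ) * Complex.I * ((k : ℕ) * (q : ℕ)) / n)
          = ((2 * Real.pi * ((k : ℕ) * (q : ℕ)) / n : ℝ) : ℂ) * Complex.I := by
        push_cast; ring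
      rw [he, _root_.map_mul, Complex.conj_ofReal, Complex.conj_I]
      ring
    rw [hc, hd]
    push_cast
    field_simp
    ring
  rw [Finset.sum_congr rfl fun k _ => hterm k, Fin.sum_univ_eq_sum_range (fun i => ζ ^ i)]
  by_cases hpq : p = q
  · have : d = 0 := by rw [hd, hpq]; ring
    simp [hζ, this, hpq]
  · have hd0 : d ≠ 0 := by
      rw [hd]
      intro h
      exact hpq (Fin.ext (by omega))
    have hζn : ζ ^ n = 1 := by
      rw [hζ, ← Complex.exp_nat_mul]
      have : (n : ℂ) * (2 * Real.pi * Complex.I * d / n) = (d : ℂ) * (2 * Real.pi * Complex.I) := by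
        field_simp
      rw [this, Complex.exp_int_mul_two_pi_mul_I]
    have hζ1 : ζ ≠ 1 := by
      intro h
      rw [hζ, Complex.exp_eq_one_iff] at h
      obtain ⟨m, hm⟩ := h
      have h2πI : (2 * (Real.pi : ℂ) * Complex.I) ≠ 0 := by
        simp [Real.pi_ne_zero, Complex.I_ne_zero]
      have hm' : ((d : ℂ) / n) * (2 * Real.pi * Complex.I)
          = (m : ℂ) * (2 * Real.pi * Complex.I) := by rw [← hm]; ring
      have h4 : (d : ℂ) / n = (m : ℂ) := mul_right_cancel₀ h2πI hm'
      rw [div_eq_iff hn'] at h4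
      have h3 : d = m * (n : ℤ) := by exact_mod_cast h4
      have hdvd : (n : ℤ) ∣ d := ⟨m, by rw [h3]; ring⟩
      have : d = 0 := Int.eq_zero_of_dvd_of_natAbs_lt_natAbs hdvd (by rw [hd]; omega)
      exact hd0 this
    rw [geom_sum_eq hζ1, hζn]
    simp [hpq]

/-- the pinching (dephasing) of a density matrix in an orthonormal family
dominates the state up to the factor `|T|`. -/
theorem pinching_operator_inequality
    {D T : Type} [Fintype D] [DecidableEq D] [Fintype T]
    (ψ : T → D → ℂ)
    (horth : ∀ i j, (∑ a, (starRingEnd ℂ) (ψ i a) * ψ j a) = if i = j then 1 else 0)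
    (β : T × T → ℂ)
    (ρ : Matrix D D ℂ)
    (hρdef : ρ = ∑ i : T, ∑ j : T, β (i, j) • outer (ψ i) (ψ j))
    (hρ : IsDensity ρ) :
    (((Fintype.card T : ℂ) • (∑ t : T, β (t, t) • outer (ψ t) (ψ t)) - ρ)).PosSemidef := by
  classical
  rcases isEmpty_or_nonempty T with hT | hT
  · exfalso
    have h0 : ρ = 0 := by simp [hρdef]
    have h1 := hρ.2
    rw [h0] at h1
    simp [Matrix.trace] at h1
  have hn : 0 < Fintype.card T := Fintype.card_pos
  set n := Fintype.card T with hncard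
  haveI : NeZero n := ⟨hn.ne'⟩
  set e := Fintype.equivFin T with he
  set f : Fin n → T → ℂ :=
    fun k t => Complex.exp (2 * Real.pi * Complex.I * ((k : ℕ) * ((e t : ℕ))) / n) with hf
  set c : (D → ℂ) → T → ℂ := fun x i => ∑ a, (starRingEnd ℂ) (ψ i a) * x a with hc
  -- quadratic form of a double sum of outer products
  have hQF : ∀ (γ : T → T → ℂ) (x : D → ℂ),
      star x ⬝ᵥ ((∑ i : T, ∑ j : T, γ i j • outer (ψ i) (ψ j)) *ᵥ x)
        = ∑ i : T, ∑ j : T, γ i j * ((starRingEnd ℂ) (c x i) * c x j) := by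
    intro γ x
    rw [qf_sum]
    refine Finset.sum_congr rfl fun i _ => ?_
    rw [qf_sum]
    refine Finset.sum_congr rfl fun j _ => ?_
    rw [qf_smul, outer_qf]
  -- the coefficient quadratic form is nonnegative
  have hQpos : ∀ d : T → ℂ,
      0 ≤ ∑ i : T, ∑ j : T, β (i, j) * ((starRingEnd ℂ) (d i) * d j) := by
    intro d
    have hcy : ∀ i, c (fun a => ∑ m, d m * ψ m a) i = d i := by
      intro i
      simp only [hc]
      calc ∑ a, (starRingEnd ℂ) (ψ i a) * ∑ m, d m * ψ m a
          = ∑ m, d m * ∑ a, (starRingEnd ℂ) (ψ i a) * ψ m a := by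
            simp_rw [Finset.mul_sum]
            rw [Finset.sum_comm]
            refine Finset.sum_congr rfl fun m _ => ?_
            refine Finset.sum_congr rfl fun a _ => by ring
        _ = d i := by simp [horth]
    have h := hρ.1.dotProduct_mulVec_nonneg (fun a => ∑ m, d m * ψ m a)
    rw [hρdef, hQF (fun i j => β (i, j))] at h
    simpa only [hcy] using h
  -- diagonal coefficients are nonnegative, hence self-adjoint
  have hβpos : ∀ t, 0 ≤ β (t, t) := by
    intro t
    have h := hQpos (fun m => if m = t then 1 else 0)
    simpa only [apply_ite (starRingEnd ℂ), _root_.map_one, _root_.map_zero, ite_mul, one_mul, zero_mul,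
      mul_ite, mul_one, mul_zero, Finset.sum_ite_eq', Finset.mem_univ, if_true] using h
  have hβreal : ∀ t, (starRingEnd ℂ) (β (t, t)) = β (t, t) :=
    fun t => IsSelfAdjoint.of_nonneg (hβpos t)
  -- Hermitian part
  have hS : (∑ t : T, β (t, t) • outer (ψ t) (ψ t)).IsHermitian := by
    show _ᴴ = _
    rw [Matrix.conjTranspose_sum]
    refine Finset.sum_congr rfl fun t _ => ?_
    rw [Matrix.conjTranspose_smul, outer_ct]
    congr 1
    exact hβreal t
  have hherm : (((n : ℂ)) • (∑ t : T, β (t, t) • outer (ψ t) (ψ t)) - ρ).IsHermitian := by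
    refine Matrix.IsHermitian.sub ?_ hρ.1.1
    show _ᴴ = _
    rw [Matrix.conjTranspose_smul, hS]
    congr 1
    simp
  refine Matrix.PosSemidef.of_dotProduct_mulVec_nonneg hherm fun x => ?_
  set z : Fin n → T → ℂ := fun k i => (starRingEnd ℂ) (f k i) * c x i with hz
  -- diagonal double-sum form of the pinched state
  have hSd : (∑ t : T, β (t, t) • outer (ψ t) (ψ t))
      = ∑ i : T, ∑ j : T, (if i = j then β (i, i) else 0) • outer (ψ i) (ψ j) := by
    refine Finset.sum_congr rfl fun i _ => ?_
    rw [Finset.sum_eq_single i]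
    · simp
    · intro j _ hji
      simp [Ne.symm hji]
    · intro h
      exact absurd (Finset.mem_univ i) h
  have hS1 : star x ⬝ᵥ ((∑ t : T, β (t, t) • outer (ψ t) (ψ t)) *ᵥ x)
      = ∑ t : T, β (t, t) * ((starRingEnd ℂ) (c x t) * c x t) := by
    rw [hSd, hQF]
    refine Finset.sum_congr rfl fun i _ => ?_
    simp [ite_mul, Finset.sum_ite_eq]
  have hR1 : star x ⬝ᵥ (ρ *ᵥ x)
      = ∑ i : T, ∑ j : T, β (i, j) * ((starRingEnd ℂ) (c x i) * c x j) := by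
    rw [hρdef, hQF (fun i j => β (i, j))]
  -- averaging identity
  have hA : (∑ k : Fin n, ∑ i : T, ∑ j : T, β (i, j) * ((starRingEnd ℂ) (z k i) * z k j))
      = (n : ℂ) * ∑ t : T, β (t, t) * ((starRingEnd ℂ) (c x t) * c x t) := by
    rw [Finset.sum_comm, Finset.mul_sum]
    refine Finset.sum_congr rfl fun i _ => ?_
    rw [Finset.sum_comm]
    calc ∑ j : T, ∑ k : Fin n, β (i, j) * ((starRingEnd ℂ) (z k i) * z k j)
        = ∑ j : T, (β (i, j) * ((starRingEnd ℂ) (c x i) * c x j)) *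
            ∑ k : Fin n, f k i * (starRingEnd ℂ) (f k j) := by
          refine Finset.sum_congr rfl fun j _ => ?_
          rw [Finset.mul_sum]
          refine Finset.sum_congr rfl fun k _ => ?_
          simp only [hz, _root_.map_mul, Complex.conj_conj]
          ring
      _ = ∑ j : T, (β (i, j) * ((starRingEnd ℂ) (c x i) * c x j)) *
            (if i = j then (n : ℂ) else 0) := by
          refine Finset.sum_congr rfl fun j _ => ?_
          simp only [hf]
          rw [roots_sum n hn (e i) (e j)]
          congr 1
          simp
      _ = (n : ℂ) * (β (i, i) * ((starRingEnd ℂ) (c x i) * c x i)) := by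
          simp [mul_ite, mul_zero, Finset.sum_ite_eq]
          ring
  have hB : (∑ i : T, ∑ j : T, β (i, j) * ((starRingEnd ℂ) (z 0 i) * z 0 j))
      = ∑ i : T, ∑ j : T, β (i, j) * ((starRingEnd ℂ) (c x i) * c x j) := by
    have hz0 : ∀ i, z 0 i = c x i := by
      intro i
      simp [hz, hf]
    simp only [hz0]
  have key : star x ⬝ᵥ ((((n : ℂ)) • (∑ t : T, β (t, t) • outer (ψ t) (ψ t)) - ρ) *ᵥ x)
      = ∑ k ∈ Finset.univ.erase (0 : Fin n),
          ∑ i : T, ∑ j : T, β (i, j) * ((starRingEnd ℂ) (z k i) * z k j) := by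
    rw [Finset.sum_erase_eq_sub (Finset.mem_univ (0 : Fin n)), hA, hB,
      Matrix.sub_mulVec, dotProduct_sub, Matrix.smul_mulVec, dotProduct_smul,
      smul_eq_mul, hS1, hR1]
  rw [key]
  exact Finset.sum_nonneg fun k _ => hQpos (z k)

end
end

section
/- Let D be a finite type with |D| = d ≥ 1, θ ∈ ℂ^D a unit vector, and n, r ∈ ℕ with 1 ≤ n and r ≤ n. Then the linear span of V(n, θ, r) admits an orthonormal basis all of whose elements belong to V(n, θ, r), and its dimension is at most C(n, r)·d^r; moreover C(n, r)·d^r ≤ 2^{n·h(r/n)}·d^r. -/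
open Matrix BigOperators
open scoped Classical ComplexOrder

noncomputable section

/-- The set `V(n, θ, r)` of vectors that are `θ`-iid on `n - r` positions and arbitrary
on the remaining `r` positions. -/
def VSet {D : Type} (n : ℕ) (θ : D → ℂ) (r : ℕ) : Set ((Fin n → D) → ℂ) :=
  {v | ∃ S : Finset (Fin n), S.card = n - r ∧
    ∃ Ω : ({i : Fin n // i ∉ S} → D) → ℂ,
      ∀ x : Fin n → D, v x = (∏ i ∈ S, θ (x i)) * Ω (fun i => x i.1)}

/-- A unit vector w.r.t. the standard Hermitian inner product. -/
def IsUnitVec {X : Type} [Fintype X] (v : X → ℂ) : Prop :=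
  ∑ x, (starRingEnd ℂ) (v x) * v x = 1

/-- Binary entropy function (base 2). -/
def binEnt (x : ℝ) : ℝ := -(x * Real.logb 2 x) - (1 - x) * Real.logb 2 (1 - x)

/- ---------- auxiliary lemmas ---------- -/

lemma VSet.sum_prod_swap {D K : Type} [Fintype D] [Fintype K] [DecidableEq K] (F : K → D → ℂ) :
    ∑ x : K → D, ∏ i, F i (x i) = ∏ i, ∑ a, F i a := by
  classical
  rw [Finset.prod_univ_sum, Fintype.piFinset_univ]

lemma VSet.key_ortho {D : Type} [Fintype D] (b : OrthonormalBasis D ℂ (EuclideanSpace ℂ D)) :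
    ∀ k l : D, ∑ a, (starRingEnd ℂ) (b k a) * b l a = if k = l then 1 else 0 := by
  intro k l
  have hb := b.orthonormal
  rw [orthonormal_iff_ite] at hb
  rw [← hb k l]
  simp [PiLp.inner_apply, RCLike.inner_apply]
  exact Finset.sum_congr rfl fun x _ => mul_comm _ _

lemma VSet.complete {D : Type} [Fintype D] (b : OrthonormalBasis D ℂ (EuclideanSpace ℂ D))
    (a c : D) : ∑ k, (starRingEnd ℂ) (b k a) * b k c = if a = c then 1 else 0 := by
  classical
  set M : Matrix D D ℂ := Matrix.of (fun k x => (starRingEnd ℂ) (b k x)) with hM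
  set N : Matrix D D ℂ := Matrix.of (fun x k => b k x) with hN
  have hMN : M * N = 1 := by
    ext k l
    rw [Matrix.mul_apply]
    simp only [hM, hN, Matrix.one_apply, Matrix.of_apply]
    exact VSet.key_ortho b k l
  have hNM : N * M = 1 := mul_eq_one_comm.mp hMN
  have h : ∑ k, b k a * (starRingEnd ℂ) (b k c) = if a = c then 1 else 0 := by
    have h := congrFun (congrFun hNM a) c
    rw [Matrix.mul_apply] at h
    simpa [hM, hN, Matrix.one_apply] using h
  have h2 := congrArg (starRingEnd ℂ) h
  simpa [map_sum, _root_.map_mul, MonoidWithZeroHom.map_ite_one_zero, starRingEnd_self_apply] using h2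

lemma VSet.exists_onb {D : Type} [Fintype D] [Nonempty D] (θ : D → ℂ) (hθ : IsUnitVec θ) :
    ∃ (b : OrthonormalBasis D ℂ (EuclideanSpace ℂ D)) (i0 : D), ∀ a, b i0 a = θ a := by
  obtain ⟨i0⟩ := (inferInstance : Nonempty D)
  have card_ι : Module.finrank ℂ (EuclideanSpace ℂ D) = Fintype.card D := by
    simp [finrank_euclideanSpace]
  set v : D → EuclideanSpace ℂ D := fun _ => (WithLp.toLp 2 θ : EuclideanSpace ℂ D) with hv
  have hon : Orthonormal ℂ (({i0} : Set D).restrict v) := by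
    rw [orthonormal_iff_ite]
    intro i j
    have : i = j := Subtype.ext (i.2.trans j.2.symm)
    subst this
    simp only [if_pos rfl]
    simp only [Set.restrict_apply, hv, PiLp.inner_apply, RCLike.inner_apply, WithLp.ofLp_toLp]
    unfold IsUnitVec at hθ
    rw [← hθ]
    refine Finset.sum_congr rfl fun x _ => ?_
    exact mul_comm _ _
  obtain ⟨b, hb⟩ := hon.exists_orthonormalBasis_extension_of_card_eq card_ι
  exact ⟨b, i0, fun a => by rw [hb i0 rfl]⟩

lemma VSet.tensor_ortho {D K : Type} [Fintype D] [DecidableEq D] [Fintype K] [DecidableEq K]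
    (b : OrthonormalBasis D ℂ (EuclideanSpace ℂ D)) (f g : K → D) :
    ∑ x : K → D, (starRingEnd ℂ) (∏ i, b (f i) (x i)) * ∏ i, b (g i) (x i)
      = if f = g then 1 else 0 := by
  classical
  have h : ∀ x : K → D, (starRingEnd ℂ) (∏ i, b (f i) (x i)) * ∏ i, b (g i) (x i)
      = ∏ i, ((starRingEnd ℂ) (b (f i) (x i)) * b (g i) (x i)) := by
    intro x; rw [_root_.map_prod, ← Finset.prod_mul_distrib]
  rw [Finset.sum_congr rfl fun x _ => h x,
    VSet.sum_prod_swap (fun i a => (starRingEnd ℂ) (b (f i) a) * b (g i) a),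
    Finset.prod_congr rfl fun i _ => VSet.key_ortho b (f i) (g i)]
  by_cases hfg : f = g
  · subst hfg; simp
  · rw [if_neg hfg]
    obtain ⟨i, hi⟩ := Function.ne_iff.mp hfg
    exact Finset.prod_eq_zero (Finset.mem_univ i) (by simp [hi])

lemma VSet.expand {D K : Type} [Fintype D] [Fintype K] [DecidableEq K]
    (b : OrthonormalBasis D ℂ (EuclideanSpace ℂ D)) (v : (K → D) → ℂ) (y : K → D) :
    v y = ∑ g : K → D,
      (∑ y0, v y0 * ∏ i, (starRingEnd ℂ) (b (g i) (y0 i))) * ∏ i, b (g i) (y i) := by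
  classical
  have step1 : ∀ g : K → D,
      (∑ y0, v y0 * ∏ i, (starRingEnd ℂ) (b (g i) (y0 i))) * ∏ i, b (g i) (y i)
      = ∑ y0, v y0 * ∏ i, ((starRingEnd ℂ) (b (g i) (y0 i)) * b (g i) (y i)) := by
    intro g
    rw [Finset.sum_mul]
    refine Finset.sum_congr rfl fun y0 _ => ?_
    rw [mul_assoc, ← Finset.prod_mul_distrib]
  rw [Finset.sum_congr rfl fun g _ => step1 g, Finset.sum_comm]
  have step2 : ∀ y0 : K → D,
      ∑ g : K → D, v y0 * ∏ i, ((starRingEnd ℂ) (b (g i) (y0 i)) * b (g i) (y i))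
      = v y0 * if y0 = y then 1 else 0 := by
    intro y0
    rw [← Finset.mul_sum,
      VSet.sum_prod_swap (fun i k => (starRingEnd ℂ) (b k (y0 i)) * b k (y i)),
      Finset.prod_congr rfl fun i _ => VSet.complete b (y0 i) (y i)]
    by_cases hy : y0 = y
    · subst hy; simp
    · rw [if_neg hy]
      obtain ⟨i, hi⟩ := Function.ne_iff.mp hy
      rw [Finset.prod_eq_zero (Finset.mem_univ i) (by simp [hi]), mul_zero]
  rw [Finset.sum_congr rfl fun y0 _ => step2 y0]
  simp

lemma VSet.count_le {D : Type} [Fintype D] [DecidableEq D] (d : ℕ) (hd : Fintype.card D = d)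
    (n r : ℕ) (hr : r ≤ n) (i0 : D) :
    Fintype.card {f : Fin n → D // (Finset.univ.filter fun i => f i ≠ i0).card ≤ r}
      ≤ n.choose r * d ^ r := by
  classical
  set P : (Fin n → D) → Prop := fun f => (Finset.univ.filter fun i => f i ≠ i0).card ≤ r with hP
  have hcard : ∀ T : {T : Finset (Fin n) // T ∈ Finset.univ.powersetCard r},
      Fintype.card ↥T.1 = r := by
    intro T
    rw [Fintype.card_coe]
    exact (Finset.mem_powersetCard.mp T.2).2
  set σ : {T : Finset (Fin n) // T ∈ Finset.univ.powersetCard r} × (Fin r → D) → {f // P f} :=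
    fun p => ⟨fun i => if h : i ∈ p.1.1 then p.2 ((Fintype.equivFinOfCardEq (hcard p.1)) ⟨i, h⟩) else i0, by
      refine le_trans (le_of_le_of_eq (Finset.card_le_card ?_) (Fintype.card_coe p.1.1 ▸ hcard p.1)) le_rfl
      intro i hi
      simp only [Finset.mem_filter, Finset.mem_univ, true_and] at hi
      by_contra h
      exact hi (dif_neg h)⟩ with hσ
  have hsurj : Function.Surjective σ := by
    rintro ⟨f, hf⟩
    set A := Finset.univ.filter fun i => f i ≠ i0 with hA
    obtain ⟨T, hAT, hTcard⟩ := Finset.exists_superset_card_eq hf (by simpa using hr)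
    have hTmem : T ∈ Finset.univ.powersetCard r := Finset.mem_powersetCard.mpr ⟨Finset.subset_univ T, hTcard⟩
    set e := Fintype.equivFinOfCardEq (hcard ⟨T, hTmem⟩)
    refine ⟨⟨⟨T, hTmem⟩, fun k => f (e.symm k).1⟩, ?_⟩
    apply Subtype.ext
    funext i
    by_cases h : i ∈ T
    · simp only [σ, dif_pos h]
      congr 1
      exact congrArg _ (e.symm_apply_apply ⟨i, h⟩)
    · simp only [σ, dif_neg h]
      by_contra hne
      exact h (hAT (Finset.mem_filter.mpr ⟨Finset.mem_univ i, fun hx => hne hx.symm⟩))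
  calc Fintype.card {f // P f} ≤ _ := Fintype.card_le_of_surjective σ hsurj
    _ = n.choose r * d ^ r := by
        rw [Fintype.card_prod, Fintype.card_coe, Finset.card_powersetCard, Fintype.card_fun]
        simp [hd]

lemma VSet.choose_le_ent (n r : ℕ) (hn : 1 ≤ n) (hr : r ≤ n) :
    ((n.choose r : ℕ) : ℝ) ≤ 2 ^ ((n : ℝ) * binEnt ((r : ℝ) / n)) := by
  rcases Nat.eq_zero_or_pos r with hr0 | hr0
  · subst hr0
    simp [binEnt]
  rcases eq_or_lt_of_le hr with hrn | hrn
  · subst hrn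
    have : (r : ℝ) / r = 1 := div_self (by positivity)
    simp [binEnt, this]
  have hnpos : (0:ℝ) < n := by positivity
  set p : ℝ := (r : ℝ) / n with hp
  have hp0 : 0 < p := by positivity
  have hp1 : p < 1 := (div_lt_one hnpos).mpr (by exact_mod_cast hrn)
  have h1p : 0 < 1 - p := by linarith
  have e1 : (n : ℝ) * p = r := by rw [hp]; field_simp
  have e2 : (n : ℝ) * (1 - p) = ((n - r : ℕ) : ℝ) := by
    rw [Nat.cast_sub hr, hp]; field_simp
  set A : ℝ := p ^ r with hA
  set B : ℝ := (1 - p) ^ (n - r) with hB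
  have hApos : 0 < A := by positivity
  have hBpos : 0 < B := by positivity
  have key1 : (n.choose r : ℝ) * (A * B) ≤ 1 := by
    have hbin : (p + (1 - p)) ^ n = ∑ k ∈ Finset.range (n + 1),
        p ^ k * (1 - p) ^ (n - k) * (n.choose k) := add_pow p (1-p) n
    have hone : (1:ℝ) = ∑ k ∈ Finset.range (n + 1),
        p ^ k * (1 - p) ^ (n - k) * (n.choose k) := by
      rw [← hbin]; norm_num
    have hterm : p ^ r * (1 - p) ^ (n - r) * (n.choose r : ℝ) ≤
        ∑ k ∈ Finset.range (n + 1), p ^ k * (1 - p) ^ (n - k) * (n.choose k) := by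
      refine Finset.single_le_sum (f := fun k => p ^ k * (1 - p) ^ (n - k) * (n.choose k : ℝ))
        (fun k _ => ?_) (Finset.mem_range.mpr (Nat.lt_succ_of_le hr))
      positivity
    rw [← hone] at hterm
    calc (n.choose r : ℝ) * (A * B) = p ^ r * (1 - p) ^ (n - r) * (n.choose r : ℝ) := by ring
      _ ≤ 1 := hterm
  have key1' : (n.choose r : ℝ) ≤ A⁻¹ * B⁻¹ := by
    have hABpos : (0:ℝ) < A * B := by positivity
    calc (n.choose r : ℝ) = (n.choose r : ℝ) * (A * B) * (A * B)⁻¹ := by field_simp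
      _ ≤ 1 * (A * B)⁻¹ := mul_le_mul_of_nonneg_right key1 (by positivity)
      _ = A⁻¹ * B⁻¹ := by rw [one_mul, mul_inv]
  refine key1'.trans (le_of_eq ?_)
  have expand : (n : ℝ) * binEnt p = -((r:ℝ) * Real.logb 2 p) + -(((n - r : ℕ):ℝ) * Real.logb 2 (1 - p)) := by
    unfold binEnt
    rw [← e1, ← e2]; ring
  rw [expand, Real.rpow_add (by norm_num : (0:ℝ) < 2)]
  have f1 : (2:ℝ) ^ (-((r:ℝ) * Real.logb 2 p)) = A⁻¹ := by
    rw [Real.rpow_neg (by norm_num), mul_comm, Real.rpow_mul (by norm_num),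
      Real.rpow_logb (by norm_num) (by norm_num) hp0, Real.rpow_natCast]
  have f2 : (2:ℝ) ^ (-(((n - r : ℕ):ℝ) * Real.logb 2 (1 - p))) = B⁻¹ := by
    rw [Real.rpow_neg (by norm_num), mul_comm, Real.rpow_mul (by norm_num),
      Real.rpow_logb (by norm_num) (by norm_num) h1p, Real.rpow_natCast]
  rw [f1, f2]

/-- the span of `V(n, θ, r)` admits an orthonormal basis consisting of
vectors of `V(n, θ, r)`, of size at most `C(n,r)·d^r ≤ 2^{n·h(r/n)}·d^r`. -/
theorem VSet_span_ONB
    {D : Type} [Fintype D] [DecidableEq D]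
    (d : ℕ) (hd : Fintype.card D = d) (hd1 : 1 ≤ d)
    (θ : D → ℂ) (hθ : IsUnitVec θ)
    (n r : ℕ) (hn : 1 ≤ n) (hr : r ≤ n) :
    (∃ (m : ℕ) (ψ : Fin m → ((Fin n → D) → ℂ)),
      (∀ i, ψ i ∈ VSet n θ r) ∧
      (∀ i j, (∑ x, (starRingEnd ℂ) (ψ i x) * ψ j x) = if i = j then 1 else 0) ∧
      Submodule.span ℂ (Set.range ψ) = Submodule.span ℂ (VSet n θ r) ∧
      m ≤ n.choose r * d ^ r) ∧
    Module.finrank ℂ (Submodule.span ℂ (VSet n θ r)) ≤ n.choose r * d ^ r ∧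
    ((n.choose r * d ^ r : ℕ) : ℝ) ≤
      2 ^ ((n : ℝ) * binEnt ((r : ℝ) / n)) * (d : ℝ) ^ r := by
  classical
  have hne : Nonempty D := Fintype.card_pos_iff.mp (by omega)
  obtain ⟨b, i0, hb0⟩ := VSet.exists_onb θ hθ
  set P : (Fin n → D) → Prop := fun f => (Finset.univ.filter fun i => f i ≠ i0).card ≤ r with hPdef
  set T : (Fin n → D) → ((Fin n → D) → ℂ) := fun f x => ∏ i, b (f i) (x i) with hTdef
  -- membership of tensors in VSet
  have hmem : ∀ f : Fin n → D, P f → T f ∈ VSet n θ r := by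
    intro f hf
    have hAc : n - r ≤ (Finset.univ.filter fun i => f i ≠ i0)ᶜ.card := by
      rw [Finset.card_compl, Fintype.card_fin]
      exact Nat.sub_le_sub_left hf n
    obtain ⟨S, hSA, hScard⟩ := Finset.exists_subset_card_eq hAc
    refine ⟨S, hScard, fun y => ∏ i : {i : Fin n // i ∉ S}, b (f i.1) (y i), fun x => ?_⟩
    have hsplit : T f x = (∏ i ∈ S, b (f i) (x i)) * ∏ i ∈ Sᶜ, b (f i) (x i) :=
      (Finset.prod_mul_prod_compl S _).symm
    rw [hsplit]
    congr 1
    · refine Finset.prod_congr rfl fun i hi => ?_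
      have hi' := hSA hi
      rw [Finset.mem_compl, Finset.mem_filter] at hi'
      push_neg at hi'
      rw [hi' (Finset.mem_univ i), hb0]
    · exact Finset.prod_subtype Sᶜ (fun i => Finset.mem_compl) (fun i => b (f i) (x i))
  -- the ONB
  set m : ℕ := Fintype.card {f : Fin n → D // P f} with hm
  set eM : {f : Fin n → D // P f} ≃ Fin m := Fintype.equivFin _ with heM
  set ψ : Fin m → ((Fin n → D) → ℂ) := fun k => T ((eM.symm k).1) with hψ
  have hψ_eq : ∀ s : {f : Fin n → D // P f}, ψ (eM s) = T s.1 := by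
    intro s; rw [hψ]; simp
  have hψ_mem : ∀ k, ψ k ∈ VSet n θ r := fun k => hmem _ (eM.symm k).2
  -- orthonormality
  have hortho : ∀ i j, (∑ x, (starRingEnd ℂ) (ψ i x) * ψ j x) = if i = j then 1 else 0 := by
    intro i j
    rw [show (∑ x, (starRingEnd ℂ) (ψ i x) * ψ j x)
        = if (eM.symm i).1 = (eM.symm j).1 then 1 else 0 from
      VSet.tensor_ortho b ((eM.symm i).1) ((eM.symm j).1)]
    by_cases h : i = j
    · subst h; simp
    · rw [if_neg h, if_neg ?_]
      intro he
      exact h (eM.symm.injective (Subtype.ext he))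
  -- span inclusion: VSet ⊆ span (range ψ)
  have hsub : VSet n θ r ⊆ (Submodule.span ℂ (Set.range ψ) : Set ((Fin n → D) → ℂ)) := by
    rintro v ⟨S, hS, Ω, hΩ⟩
    set ex : ({i : Fin n // i ∉ S} → D) → (Fin n → D) :=
      fun g i => if h : i ∈ S then i0 else g ⟨i, h⟩ with hex
    have hPext : ∀ g, P (ex g) := by
      intro g
      have hsubset : (Finset.univ.filter fun i => ex g i ≠ i0) ⊆ Sᶜ := by
        intro i hi
        rw [Finset.mem_filter] at hi
        rw [Finset.mem_compl]
        intro hiS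
        exact hi.2 (dif_pos hiS)
      refine le_trans (Finset.card_le_card hsubset) ?_
      rw [Finset.card_compl, Fintype.card_fin, hS]
      omega
    have hTg : ∀ (g : {i : Fin n // i ∉ S} → D) (x : Fin n → D),
        T (ex g) x = (∏ i ∈ S, θ (x i)) * ∏ i : {i : Fin n // i ∉ S}, b (g i) (x i.1) := by
      intro g x
      have hsplit : T (ex g) x = (∏ i ∈ S, b (ex g i) (x i)) * ∏ i ∈ Sᶜ, b (ex g i) (x i) :=
        (Finset.prod_mul_prod_compl S _).symm
      rw [hsplit]
      congr 1
      · refine Finset.prod_congr rfl fun i hi => ?_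
        rw [hex]; simp only [dif_pos hi]; rw [hb0]
      · rw [Finset.prod_subtype Sᶜ (fun i => Finset.mem_compl) (fun i => b (ex g i) (x i))]
        refine Finset.prod_congr rfl fun i _ => ?_
        rw [hex]; simp only [dif_neg i.2]
    have hrepr : v = ∑ g : {i : Fin n // i ∉ S} → D,
        ((∑ y0, Ω y0 * ∏ i, (starRingEnd ℂ) (b (g i) (y0 i))) : ℂ) • T (ex g) := by
      funext x
      rw [hΩ x, VSet.expand b Ω (fun i => x i.1), Finset.mul_sum, Finset.sum_apply]
      refine Finset.sum_congr rfl fun g _ => ?_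
      rw [Pi.smul_apply, smul_eq_mul, hTg g x]
      ring
    rw [hrepr]
    refine Submodule.sum_mem _ fun g _ => Submodule.smul_mem _ _ (Submodule.subset_span ?_)
    exact ⟨eM ⟨ex g, hPext g⟩, hψ_eq ⟨ex g, hPext g⟩⟩
  have hspan : Submodule.span ℂ (Set.range ψ) = Submodule.span ℂ (VSet n θ r) := by
    apply le_antisymm
    · refine Submodule.span_le.mpr ?_
      rintro v ⟨k, rfl⟩
      exact Submodule.subset_span (hψ_mem k)
    · exact Submodule.span_le.mpr hsub
  have hmle : m ≤ n.choose r * d ^ r := VSet.count_le d hd n r hr i0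
  refine ⟨⟨m, ψ, hψ_mem, hortho, hspan, hmle⟩, ?_, ?_⟩
  · rw [← hspan]
    have h1 : Module.finrank ℂ (Submodule.span ℂ (Set.range ψ)) ≤ (Set.range ψ).toFinset.card :=
      finrank_span_le_card (Set.range ψ)
    refine le_trans (le_trans h1 ?_) hmle
    rw [Set.toFinset_card]
    exact le_trans (Fintype.card_range_le ψ) (by simp [hm])
  · push_cast
    have := VSet.choose_le_ent n r hn hr
    calc (n.choose r : ℝ) * (d:ℝ) ^ r ≤ 2 ^ ((n : ℝ) * binEnt ((r : ℝ) / n)) * (d:ℝ) ^ r :=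
      mul_le_mul_of_nonneg_right this (by positivity)

end
end

section
/- Let A be a finite type, σ a density matrix on ℂ^A, and n, m, r ∈ ℕ with r ≤ n. If ρ is an (n + m, r)-almost-iid state in σ on ℂ^(Fin (n+m) → A), then the marginal of ρ on the first n subsystems (the partial trace over the last m tensor factors) is an (n, r)-almost-iid state in σ. -/
open Matrix BigOperators Kronecker Filter
open scoped Classical ComplexOrder

noncomputable section

/-- Partial trace over the second tensor factor. -/
def ptraceSnd {X E : Type} [Fintype E] (M : Matrix (X × E) (X × E) ℂ) : Matrix X X ℂ :=
  fun x x' => ∑ e : E, M (x, e) (x', e)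

/-- Partial trace over the first tensor factor. -/
def ptraceFst {X E : Type} [Fintype X] (M : Matrix (X × E) (X × E) ℂ) : Matrix E E ℂ :=
  fun e e' => ∑ x : X, M (x, e) (x, e')

/-- Partial trace over the `E`-components of an `n`-fold system of pairs. -/
def ptraceE {A E : Type} [Fintype E] {n : ℕ}
    (M : Matrix (Fin n → A × E) (Fin n → A × E) ℂ) : Matrix (Fin n → A) (Fin n → A) ℂ :=
  fun a a' => ∑ e : Fin n → E, M (fun i => (a i, e i)) (fun i => (a' i, e i))

/-- Invariance under the simultaneous permutation action of all permutations of `Fin n`. -/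
def PermInvariant {D : Type} {n : ℕ} (M : Matrix (Fin n → D) (Fin n → D) ℂ) : Prop :=
  ∀ π : Equiv.Perm (Fin n), ∀ x y : Fin n → D, M (x ∘ π) (y ∘ π) = M x y

/-- The range of a matrix is contained in the span of a set of vectors. -/
def RangeInSpan {X : Type} [Fintype X] (M : Matrix X X ℂ) (V : Set (X → ℂ)) : Prop :=
  LinearMap.range M.mulVecLin ≤ Submodule.span ℂ V

/-- `ρ` is an `(n, r)`-almost-iid state in `σ`. -/
def IsAlmostIID {A : Type} [Fintype A] [DecidableEq A] (n r : ℕ)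
    (σ : Matrix A A ℂ) (ρ : Matrix (Fin n → A) (Fin n → A) ℂ) : Prop :=
  ∃ (E : Type) (_ : Fintype E) (_ : DecidableEq E) (θ : A × E → ℂ),
    IsUnitVec θ ∧ ptraceSnd (outer θ θ) = σ ∧
    ∃ ρhat : Matrix (Fin n → A × E) (Fin n → A × E) ℂ,
      IsDensity ρhat ∧ ptraceE ρhat = ρ ∧
      PermInvariant ρhat ∧ RangeInSpan ρhat (VSet n θ r)

/-- The `s`-fold tensor power of a matrix. -/
def tensorPow {X : Type} (M : Matrix X X ℂ) (s : ℕ) : Matrix (Fin s → X) (Fin s → X) ℂ :=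
  fun x y => ∏ i, M (x i) (y i)

/-- Marginal on the first `s` subsystems (partial trace over the last `n - s` factors). -/
def marginalFirst {A : Type} [Fintype A] (n s : ℕ)
    (M : Matrix (Fin n → A) (Fin n → A) ℂ) : Matrix (Fin s → A) (Fin s → A) ℂ :=
  fun x y => ∑ z : Fin (n - s) → A,
    M (fun i => if h : (i : ℕ) < s then x ⟨i, h⟩ else z ⟨(i : ℕ) - s, by have := i.isLt; omega⟩)
      (fun i => if h : (i : ℕ) < s then y ⟨i, h⟩ else z ⟨(i : ℕ) - s, by have := i.isLt; omega⟩)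

/-- Von Neumann entropy (base 2), via the eigenvalues of a Hermitian matrix. -/
def vnEntropy {X : Type} [Fintype X] [DecidableEq X] (M : Matrix X X ℂ) : ℝ :=
  if h : M.IsHermitian then -∑ i, h.eigenvalues i * Real.logb 2 (h.eigenvalues i) else 0

/-- Trace norm of a Hermitian matrix: sum of absolute values of the eigenvalues. -/
def traceNorm {X : Type} [Fintype X] [DecidableEq X] (M : Matrix X X ℂ) : ℝ :=
  if h : M.IsHermitian then ∑ i, |h.eigenvalues i| else 0

/-- Conditional entropy `H(A|B) = H(AB) - H(B)` of a bipartite density matrix. -/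
def condEnt {A B : Type} [Fintype A] [Fintype B] [DecidableEq A] [DecidableEq B]
    (M : Matrix (A × B) (A × B) ℂ) : ℝ :=
  vnEntropy M - vnEntropy (ptraceFst M)

/-- View a matrix on `Fin n → A × B` as a matrix on `(Fin n → A) × (Fin n → B)` via the
canonical bijection. -/
def splitAB {A B : Type} (n : ℕ) (M : Matrix (Fin n → A × B) (Fin n → A × B) ℂ) :
    Matrix ((Fin n → A) × (Fin n → B)) ((Fin n → A) × (Fin n → B)) ℂ :=
  Matrix.reindex (Equiv.arrowProdEquivProdArrow (Fin n) (fun _ => A) (fun _ => B))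
    (Equiv.arrowProdEquivProdArrow (Fin n) (fun _ => A) (fun _ => B)) M

/-! ### Helpers -/

/-- Glue a function on the first `n` coordinates with one on the remaining coordinates. -/
def glue (n m : ℕ) {B : Type} (x : Fin n → B) (z : Fin (n + m - n) → B) : Fin (n + m) → B :=
  fun i => if h : (i : ℕ) < n then x ⟨i, h⟩ else z ⟨(i : ℕ) - n, by have := i.isLt; omega⟩

lemma marginalFirst_eq {B : Type} [Fintype B] (n m : ℕ)
    (M : Matrix (Fin (n + m) → B) (Fin (n + m) → B) ℂ) (x y : Fin n → B) :
    marginalFirst (n + m) n M x y = ∑ z : Fin (n + m - n) → B, M (glue n m x z) (glue n m y z) :=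
  rfl

lemma glue_lt {n m : ℕ} {B : Type} (x : Fin n → B) (z : Fin (n + m - n) → B)
    {i : Fin (n + m)} (h : (i : ℕ) < n) : glue n m x z i = x ⟨i, h⟩ := dif_pos h

lemma glue_ge {n m : ℕ} {B : Type} (x : Fin n → B) (z : Fin (n + m - n) → B)
    {i : Fin (n + m)} (h : ¬ (i : ℕ) < n) :
    glue n m x z i = z ⟨(i : ℕ) - n, by have := i.isLt; omega⟩ := dif_neg h

/-- The canonical equivalence splitting `Fin (n+m) → B`. -/
def glueEquiv (n m : ℕ) (B : Type) :
    (Fin n → B) × (Fin (n + m - n) → B) ≃ (Fin (n + m) → B) where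
  toFun p := glue n m p.1 p.2
  invFun w := (fun i => w ⟨i, by have := i.isLt; omega⟩,
               fun j => w ⟨n + j, by have := j.isLt; omega⟩)
  left_inv p := by
    dsimp only
    ext i
    · show glue n m p.1 p.2 ⟨(i : ℕ), by have := i.isLt; omega⟩ = p.1 i
      rw [glue_lt p.1 p.2 (show ((⟨(i : ℕ), by have := i.isLt; omega⟩ : Fin (n + m)) : ℕ) < n from i.isLt)]
    · show glue n m p.1 p.2 ⟨n + (i : ℕ), by have := i.isLt; omega⟩ = p.2 i
      rw [glue_ge p.1 p.2 (show ¬ ((⟨n + (i : ℕ), by have := i.isLt; omega⟩ : Fin (n + m)) : ℕ) < n by simp)]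
      exact congrArg p.2 (Fin.ext (by simp))
  right_inv w := by
    dsimp only
    funext i
    by_cases h : (i : ℕ) < n
    · rw [glue_lt _ _ h]
    · rw [glue_ge _ _ h]
      congr 1
      exact Fin.ext (by have := i.isLt; simp; omega)

/-- Extend a permutation of `Fin n` to `Fin (n+m)` by the identity. -/
def extPerm (n m : ℕ) (π : Equiv.Perm (Fin n)) : Equiv.Perm (Fin (n + m)) where
  toFun i := if h : (i : ℕ) < n then ⟨π ⟨i, h⟩, by have := (π ⟨i, h⟩).isLt; omega⟩ else i
  invFun i := if h : (i : ℕ) < n then ⟨π.symm ⟨i, h⟩, by have := (π.symm ⟨i, h⟩).isLt; omega⟩ else i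
  left_inv i := by
    dsimp only
    by_cases h : (i : ℕ) < n
    · rw [dif_pos h, dif_pos (show ((⟨π ⟨i, h⟩, by have := (π ⟨i, h⟩).isLt; omega⟩ : Fin (n+m)) : ℕ) < n from (π ⟨i, h⟩).isLt)]
      apply Fin.ext
      simp
    · rw [dif_neg h, dif_neg h]
  right_inv i := by
    dsimp only
    by_cases h : (i : ℕ) < n
    · rw [dif_pos h, dif_pos (show ((⟨π.symm ⟨i, h⟩, by have := (π.symm ⟨i, h⟩).isLt; omega⟩ : Fin (n+m)) : ℕ) < n from (π.symm ⟨i, h⟩).isLt)]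
      apply Fin.ext
      simp
    · rw [dif_neg h, dif_neg h]

lemma glue_comp_extPerm {n m : ℕ} {B : Type} (x : Fin n → B) (z : Fin (n + m - n) → B)
    (π : Equiv.Perm (Fin n)) :
    glue n m (x ∘ π) z = (glue n m x z) ∘ (extPerm n m π) := by
  funext i
  by_cases h : (i : ℕ) < n
  · rw [glue_lt _ _ h]
    show x (π ⟨i, h⟩) = glue n m x z (extPerm n m π i)
    have he : extPerm n m π i = ⟨π ⟨i, h⟩, by have := (π ⟨i, h⟩).isLt; omega⟩ := dif_pos h
    rw [he, glue_lt _ _ (by exact (π ⟨i, h⟩).isLt)]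
  · rw [glue_ge _ _ h]
    show _ = glue n m x z (extPerm n m π i)
    have he : extPerm n m π i = i := dif_neg h
    rw [he, glue_ge _ _ h]
lemma trace_marginal {B : Type} [Fintype B] (n m : ℕ)
    (M : Matrix (Fin (n + m) → B) (Fin (n + m) → B) ℂ) :
    (marginalFirst (n + m) n M).trace = M.trace := by
  unfold Matrix.trace Matrix.diag
  calc ∑ x, marginalFirst (n + m) n M x x
      = ∑ p : (Fin n → B) × (Fin (n + m - n) → B), M (glue n m p.1 p.2) (glue n m p.1 p.2) := by
        rw [Fintype.sum_prod_type]
        exact Finset.sum_congr rfl fun x _ => marginalFirst_eq n m M x x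
    _ = ∑ w, M w w := Fintype.sum_equiv (glueEquiv n m B) _ _ (fun p => rfl)

lemma posSemidef_marginal {B : Type} [Fintype B] (n m : ℕ)
    (M : Matrix (Fin (n + m) → B) (Fin (n + m) → B) ℂ) (hM : M.PosSemidef) :
    (marginalFirst (n + m) n M).PosSemidef := by
  obtain ⟨C, rfl⟩ : ∃ C : Matrix (Fin (n + m) → B) (Fin (n + m) → B) ℂ, M = Cᴴ * C := by
    open scoped MatrixOrder in exact CStarAlgebra.nonneg_iff_eq_star_mul_self.mp hM.nonneg
  let D : Matrix ((Fin (n + m) → B) × (Fin (n + m - n) → B)) (Fin n → B) ℂ :=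
    fun p x => C p.1 (glue n m x p.2)
  have : marginalFirst (n + m) n (Cᴴ * C) = Dᴴ * D := by
    ext x y
    rw [marginalFirst_eq, Matrix.mul_apply, Fintype.sum_prod_type_right]
    refine Finset.sum_congr rfl fun z _ => ?_
    rw [Matrix.mul_apply]
    rfl
  rw [this]
  exact Matrix.posSemidef_conjTranspose_mul_self _

lemma permInvariant_marginal {B : Type} [Fintype B] (n m : ℕ)
    (M : Matrix (Fin (n + m) → B) (Fin (n + m) → B) ℂ) (hM : PermInvariant M) :
    PermInvariant (marginalFirst (n + m) n M) := by
  intro π x y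
  rw [marginalFirst_eq, marginalFirst_eq]
  refine Finset.sum_congr rfl fun z _ => ?_
  rw [glue_comp_extPerm x z π, glue_comp_extPerm y z π]
  exact hM (extPerm n m π) _ _
lemma glue_pair {n m : ℕ} {A E : Type} (a : Fin n → A) (e : Fin n → E)
    (z : Fin (n + m - n) → A × E) :
    glue n m (fun i => (a i, e i)) z =
    fun i => (glue n m a (fun j => (z j).1) i, glue n m e (fun j => (z j).2) i) := by
  funext i
  by_cases h : (i : ℕ) < n
  · rw [glue_lt _ _ h, glue_lt _ _ h, glue_lt _ _ h]
  · rw [glue_ge _ _ h, glue_ge _ _ h, glue_ge _ _ h]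

/-- Regrouping the summation indices for the `ptraceE`/marginal exchange. -/
def eSplit (n m : ℕ) (A E : Type) :
    (Fin n → E) × (Fin (n + m - n) → A × E) ≃ (Fin (n + m - n) → A) × (Fin (n + m) → E) where
  toFun p := (fun j => (p.2 j).1, glue n m p.1 (fun j => (p.2 j).2))
  invFun q := (fun i => q.2 ⟨i, by have := i.isLt; omega⟩,
               fun j => (q.1 j, q.2 ⟨n + j, by have := j.isLt; omega⟩))
  left_inv p := by
    dsimp only
    refine Prod.ext ?_ ?_
    · funext i
      show glue n m p.1 (fun j => (p.2 j).2) ⟨(i : ℕ), by have := i.isLt; omega⟩ = p.1 i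
      rw [glue_lt _ _ (show ((⟨(i : ℕ), by have := i.isLt; omega⟩ : Fin (n + m)) : ℕ) < n from i.isLt)]
    · funext j
      show ((p.2 j).1, glue n m p.1 (fun j => (p.2 j).2) ⟨n + (j : ℕ), by have := j.isLt; omega⟩)
          = p.2 j
      rw [glue_ge _ _ (show ¬ ((⟨n + (j : ℕ), by have := j.isLt; omega⟩ : Fin (n + m)) : ℕ) < n by simp)]
      have : (⟨n + (j : ℕ) - n, by have := j.isLt; omega⟩ : Fin (n + m - n)) = j :=
        Fin.ext (by simp)
      rw [this]
  right_inv q := by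
    dsimp only
    refine Prod.ext ?_ ?_
    · funext j
      rfl
    · funext i
      show glue n m (fun i => q.2 ⟨(i : ℕ), by have := i.isLt; omega⟩)
          (fun j => q.2 ⟨n + (j : ℕ), by have := j.isLt; omega⟩) i = q.2 i
      by_cases h : (i : ℕ) < n
      · rw [glue_lt _ _ h]
      · rw [glue_ge _ _ h]
        exact congrArg q.2 (Fin.ext (by have := i.isLt; simp; omega))

lemma ptraceE_marginal {A E : Type} [Fintype A] [Fintype E] (n m : ℕ)
    (M : Matrix (Fin (n + m) → A × E) (Fin (n + m) → A × E) ℂ) :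
    ptraceE (marginalFirst (n + m) n M) = marginalFirst (n + m) n (ptraceE M) := by
  ext a a'
  calc ptraceE (marginalFirst (n + m) n M) a a'
      = ∑ p : (Fin n → E) × (Fin (n + m - n) → A × E),
          M (glue n m (fun i => (a i, p.1 i)) p.2) (glue n m (fun i => (a' i, p.1 i)) p.2) := by
        rw [ptraceE, Fintype.sum_prod_type]
        exact Finset.sum_congr rfl fun e _ => marginalFirst_eq n m M _ _
    _ = ∑ q : (Fin (n + m - n) → A) × (Fin (n + m) → E),
          M (fun i => (glue n m a q.1 i, q.2 i)) (fun i => (glue n m a' q.1 i, q.2 i)) := by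
        refine Fintype.sum_equiv (eSplit n m A E) _ _ fun p => ?_
        rw [glue_pair a p.1 p.2, glue_pair a' p.1 p.2]
        rfl
    _ = marginalFirst (n + m) n (ptraceE M) a a' := by
        rw [marginalFirst_eq, Fintype.sum_prod_type]
        rfl
lemma restrict_mem_VSet {B : Type} (n m r : ℕ) (hr : r ≤ n) (θ : B → ℂ)
    (z : Fin (n + m - n) → B) (v : (Fin (n + m) → B) → ℂ) (hv : v ∈ VSet (n + m) θ r) :
    (fun x : Fin n → B => v (glue n m x z)) ∈ VSet n θ r := by
  obtain ⟨S, hS, Ω, hΩ⟩ := hv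
  have hle : n ≤ n + m := Nat.le_add_right n m
  set S₁ : Finset (Fin n) := Finset.univ.filter
      (fun i : Fin n => (⟨(i : ℕ), by have := i.isLt; omega⟩ : Fin (n + m)) ∈ S) with hS₁def
  have hmap : S₁.map (Fin.castLEEmb hle) = S.filter (fun i : Fin (n + m) => (i : ℕ) < n) := by
    ext i
    simp only [Finset.mem_map, Finset.mem_filter, Finset.mem_univ, true_and, hS₁def,
      Fin.castLEEmb_apply]
    constructor
    · rintro ⟨j, hj, rfl⟩
      refine ⟨?_, ?_⟩
      · exact hj
      · exact j.isLt
    · rintro ⟨hiS, hilt⟩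
      exact ⟨⟨(i : ℕ), hilt⟩, hiS, Fin.ext rfl⟩
  -- cardinality bookkeeping
  have huniv : (Finset.univ.filter (fun i : Fin (n + m) => (i : ℕ) < n)).card = n := by
    have : Finset.univ.filter (fun i : Fin (n + m) => (i : ℕ) < n) =
        Finset.univ.map (Fin.castLEEmb hle) := by
      ext i
      simp only [Finset.mem_filter, Finset.mem_univ, true_and, Finset.mem_map,
        Fin.castLEEmb_apply]
      constructor
      · intro h; exact ⟨⟨(i : ℕ), h⟩, Fin.ext rfl⟩
      · rintro ⟨j, -, rfl⟩; exact j.isLt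
    rw [this, Finset.card_map, Finset.card_univ, Fintype.card_fin]
  have huniv2 : (Finset.univ.filter (fun i : Fin (n + m) => ¬ (i : ℕ) < n)).card = m := by
    have h := Finset.card_filter_add_card_filter_not
      (s := (Finset.univ : Finset (Fin (n + m)))) (p := fun i : Fin (n + m) => (i : ℕ) < n)
    rw [huniv, Finset.card_univ, Fintype.card_fin] at h
    omega
  have hsplit : (S.filter (fun i : Fin (n + m) => (i : ℕ) < n)).card
      + (S.filter (fun i : Fin (n + m) => ¬ (i : ℕ) < n)).card = S.card :=
    Finset.card_filter_add_card_filter_not (p := fun i : Fin (n + m) => (i : ℕ) < n)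
  have h2le : (S.filter (fun i : Fin (n + m) => ¬ (i : ℕ) < n)).card ≤ m :=
    le_trans (Finset.card_le_card (Finset.filter_subset_filter _ (Finset.subset_univ S)))
      (le_of_eq huniv2)
  have hScard : S.card ≤ n + m := by
    calc S.card ≤ (Finset.univ : Finset (Fin (n + m))).card := Finset.card_le_card (Finset.subset_univ S)
    _ = n + m := by rw [Finset.card_univ, Fintype.card_fin]
  have h1card : S₁.card = (S.filter (fun i : Fin (n + m) => (i : ℕ) < n)).card := by
    rw [← hmap, Finset.card_map]
  obtain ⟨T, hTsub, hTcard⟩ := Finset.exists_subset_card_eq (s := S₁) (n := n - r) (by omega)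
  -- data for the new decomposition
  have hTmem : ∀ {i : Fin n}, i ∈ T → (⟨(i : ℕ), by have := i.isLt; omega⟩ : Fin (n + m)) ∈ S :=
    fun hi => (Finset.mem_filter.mp (hTsub hi)).2
  refine ⟨T, hTcard, fun y =>
      (∏ i ∈ (S.filter (fun i : Fin (n + m) => ¬ (i : ℕ) < n)).attach,
        θ (z ⟨(i.1 : ℕ) - n, by
          have h1 := i.1.isLt; have h2 := (Finset.mem_filter.mp i.2).2; omega⟩)) *
      ((∏ i ∈ (S₁ \ T).attach, θ (y ⟨i.1, (Finset.mem_sdiff.mp i.2).2⟩)) *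
       Ω (fun i => if h : (i.1 : ℕ) < n then
            y ⟨⟨(i.1 : ℕ), h⟩, fun hmem => i.2 (hTmem hmem)⟩
          else z ⟨(i.1 : ℕ) - n, by have := i.1.isLt; omega⟩)), fun x => ?_⟩
  show v (glue n m x z) = _
  rw [hΩ (glue n m x z)]
  dsimp only
  -- identify the Ω arguments
  have harg : (fun (i : {i : Fin (n + m) // i ∉ S}) => glue n m x z i.1) =
      (fun i => if h : (i.1 : ℕ) < n then
          (fun (j : {i : Fin n // i ∉ T}) => x j.1) ⟨⟨(i.1 : ℕ), h⟩, fun hmem => i.2 (hTmem hmem)⟩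
        else z ⟨(i.1 : ℕ) - n, by have := i.1.isLt; omega⟩) := by
    funext i
    by_cases h : (i.1 : ℕ) < n
    · rw [glue_lt _ _ h, dif_pos h]
    · rw [glue_ge _ _ h, dif_neg h]
  rw [harg]
  -- split the product over S
  rw [← Finset.prod_filter_mul_prod_filter_not S (fun i : Fin (n + m) => (i : ℕ) < n) (fun i => θ (glue n m x z i))]
  have hp1 : ∏ i ∈ S.filter (fun i : Fin (n + m) => (i : ℕ) < n), θ (glue n m x z i) =
      (∏ i ∈ S₁ \ T, θ (x i)) * ∏ i ∈ T, θ (x i) := by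
    rw [← hmap, Finset.prod_map, Finset.prod_sdiff hTsub]
    refine Finset.prod_congr rfl fun i _ => ?_
    rw [glue_lt _ _ (show ((Fin.castLEEmb hle i : Fin (n + m)) : ℕ) < n from i.isLt)]
    exact congrArg θ (congrArg x (Fin.ext rfl))
  have hp2 : ∏ i ∈ S.filter (fun i : Fin (n + m) => ¬ (i : ℕ) < n), θ (glue n m x z i) =
      ∏ i ∈ (S.filter (fun i : Fin (n + m) => ¬ (i : ℕ) < n)).attach,
        θ (z ⟨(i.1 : ℕ) - n, by
          have h1 := i.1.isLt; have h2 := (Finset.mem_filter.mp i.2).2; omega⟩) := by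
    rw [← Finset.prod_attach (S.filter (fun i : Fin (n + m) => ¬ (i : ℕ) < n)) (fun i => θ (glue n m x z i))]
    refine Finset.prod_congr rfl fun i _ => ?_
    rw [glue_ge _ _ (Finset.mem_filter.mp i.2).2]
  have hp3 : ∏ i ∈ (S₁ \ T).attach,
      θ ((fun (j : {i : Fin n // i ∉ T}) => x j.1) ⟨i.1, (Finset.mem_sdiff.mp i.2).2⟩) =
      ∏ i ∈ S₁ \ T, θ (x i) :=
    Finset.prod_attach (S₁ \ T) (fun i => θ (x i))
  rw [hp1, hp2, hp3]
  ring
/-- The indicator-restricted vector used to express the marginal's action. -/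
def uVec (n m : ℕ) {B : Type} [Fintype B] (v : (Fin n → B) → ℂ) (z : Fin (n + m - n) → B) :
    (Fin (n + m) → B) → ℂ := fun w =>
  if ((glueEquiv n m B).symm w).2 = z then v ((glueEquiv n m B).symm w).1 else 0

lemma uVec_glue (n m : ℕ) {B : Type} [Fintype B] (v : (Fin n → B) → ℂ)
    (z zy : Fin (n + m - n) → B) (y : Fin n → B) :
    uVec n m v z (glue n m y zy) = if zy = z then v y else 0 := by
  show (if ((glueEquiv n m B).symm (glueEquiv n m B (y, zy))).2 = z
    then v ((glueEquiv n m B).symm (glueEquiv n m B (y, zy))).1 else 0) = _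
  rw [Equiv.symm_apply_apply]

lemma rangeInSpan_marginal {B : Type} [Fintype B] (n m r : ℕ) (hr : r ≤ n) (θ : B → ℂ)
    (M : Matrix (Fin (n + m) → B) (Fin (n + m) → B) ℂ)
    (hM : RangeInSpan M (VSet (n + m) θ r)) :
    RangeInSpan (marginalFirst (n + m) n M) (VSet n θ r) := by
  rintro w ⟨v, rfl⟩
  rw [Matrix.mulVecLin_apply]
  have key : (marginalFirst (n + m) n M).mulVec v =
      ∑ z : Fin (n + m - n) → B,
        (fun x : Fin n → B => M.mulVec (uVec n m v z) (glue n m x z)) := by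
    funext x
    rw [Finset.sum_apply]
    have hz : ∀ z : Fin (n + m - n) → B,
        M.mulVec (uVec n m v z) (glue n m x z) =
        ∑ y, M (glue n m x z) (glue n m y z) * v y := by
      intro z
      calc M.mulVec (uVec n m v z) (glue n m x z)
          = ∑ w, M (glue n m x z) w * uVec n m v z w := rfl
        _ = ∑ p : (Fin n → B) × (Fin (n + m - n) → B),
              M (glue n m x z) (glue n m p.1 p.2) * uVec n m v z (glue n m p.1 p.2) :=
            (Fintype.sum_equiv (glueEquiv n m B) _ _ fun p => rfl).symm
        _ = ∑ y, ∑ zy, M (glue n m x z) (glue n m y zy) * (if zy = z then v y else 0) := by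
            rw [Fintype.sum_prod_type]
            exact Finset.sum_congr rfl fun y _ => Finset.sum_congr rfl fun zy _ => by
              rw [uVec_glue]
        _ = ∑ y, M (glue n m x z) (glue n m y z) * v y := by
            refine Finset.sum_congr rfl fun y _ => ?_
            simp only [mul_ite, mul_zero, Finset.sum_ite_eq', Finset.mem_univ, if_true]
    rw [Finset.sum_congr rfl fun z _ => hz z]
    have lhs : (marginalFirst (n + m) n M).mulVec v x =
        ∑ y, (∑ z : Fin (n + m - n) → B, M (glue n m x z) (glue n m y z)) * v y := by
      show (∑ y, marginalFirst (n + m) n M x y * v y) = _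
      exact Finset.sum_congr rfl fun y _ => by rw [marginalFirst_eq]
    rw [lhs]
    simp only [Finset.sum_mul]
    rw [Finset.sum_comm]
  rw [key]
  refine Submodule.sum_mem _ fun z _ => ?_
  have h1 : M.mulVec (uVec n m v z) ∈ Submodule.span ℂ (VSet (n + m) θ r) := by
    have := hM (LinearMap.mem_range_self M.mulVecLin (uVec n m v z))
    rwa [Matrix.mulVecLin_apply] at this
  have h2 : (LinearMap.funLeft ℂ ℂ (fun x : Fin n → B => glue n m x z)) (M.mulVec (uVec n m v z))
      ∈ Submodule.map (LinearMap.funLeft ℂ ℂ (fun x : Fin n → B => glue n m x z))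
        (Submodule.span ℂ (VSet (n + m) θ r)) := Submodule.mem_map_of_mem h1
  rw [Submodule.map_span] at h2
  have h3 : Submodule.span ℂ
      ((LinearMap.funLeft ℂ ℂ (fun x : Fin n → B => glue n m x z)) '' VSet (n + m) θ r)
      ≤ Submodule.span ℂ (VSet n θ r) := by
    apply Submodule.span_le.mpr
    rintro _ ⟨v', hv', rfl⟩
    exact Submodule.subset_span (restrict_mem_VSet n m r hr θ z v' hv')
  exact h3 h2
/-- the marginal on the first `n` subsystems of an `(n + m, r)`-almost-iid
state in `σ` is an `(n, r)`-almost-iid state in `σ`. -/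
theorem almostIID_marginal
    {A : Type} [Fintype A] [DecidableEq A]
    (σ : Matrix A A ℂ) (hσ : IsDensity σ)
    (n m r : ℕ) (hr : r ≤ n)
    (ρ : Matrix (Fin (n + m) → A) (Fin (n + m) → A) ℂ) (hρ : IsDensity ρ)
    (hiid : IsAlmostIID (n + m) r σ ρ) :
    IsAlmostIID n r σ (marginalFirst (n + m) n ρ) := by
  obtain ⟨E, hFE, hDE, θ, hθ, hσθ, ρhat, hdens, hptr, hperm, hrange⟩ := hiid
  refine ⟨E, hFE, hDE, θ, hθ, hσθ, marginalFirst (n + m) n ρhat,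
    ⟨posSemidef_marginal n m ρhat hdens.1, by rw [trace_marginal]; exact hdens.2⟩,
    ?_, permInvariant_marginal n m ρhat hperm, rangeInSpan_marginal n m r hr θ ρhat hrange⟩
  rw [ptraceE_marginal, hptr]

end
end

section
/- Let A and E be finite types, θ ∈ ℂ^(A × E) a unit vector, and n, r, s ∈ ℕ with r ≤ n and s ≥ 1. Let ρ be a density matrix on ℂ^(Fin n → A) admitting an extension ρ̂ on ℂ^(Fin n → A × E) (a density matrix whose partial trace over the E-components equals ρ) whose range is contained in the linear span of V(n, θ, r). Then the s-fold tensor power ρ^{⊗s}, reindexed along a bijection Fin s × Fin n ≅ Fin (n·s) to a density matrix on ℂ^(Fin (n·s) → A), admits an extension on ℂ^(Fin (n·s) → A × E) — namely ρ̂^{⊗s}, reindexed the same way — whose range is contained in the linear span of V(n·s, θ, r·s). -/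
open Matrix BigOperators Kronecker Filter
open scoped Classical ComplexOrder

noncomputable section

/-- The `s`-fold tensor power of a matrix on `Fin n → A`, reindexed along a bijection
`Fin s × Fin n ≃ Fin (n·s)` to a matrix on `Fin (n·s) → A`. -/
def tensorPowReindexed {A : Type} (n s : ℕ) (e : Fin s × Fin n ≃ Fin (n * s))
    (M : Matrix (Fin n → A) (Fin n → A) ℂ) :
    Matrix (Fin (n * s) → A) (Fin (n * s) → A) ℂ :=
  fun u v => ∏ i : Fin s, M (fun j => u (e (i, j))) (fun j => v (e (i, j)))


/-! ### Auxiliary material for the proof -/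

/-- The pure-tensor multilinear map. -/
def tensorML (Y : Type) (s : ℕ) :
    MultilinearMap ℂ (fun _ : Fin s => (Y → ℂ)) ((Fin s → Y) → ℂ) :=
  MultilinearMap.pi fun x => (MultilinearMap.mkPiAlgebra ℂ (Fin s) ℂ).compLinearMap
    (fun i => LinearMap.proj (x i))

lemma tensorML_apply (Y : Type) (s : ℕ) (v : Fin s → (Y → ℂ)) (x : Fin s → Y) :
    tensorML Y s v x = ∏ i, v i (x i) := by
  simp [tensorML]

lemma tensor_mem_span {Y : Type} {s : ℕ} (V : Set (Y → ℂ))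
    (v : Fin s → (Y → ℂ)) (hv : ∀ i, v i ∈ Submodule.span ℂ V) :
    (fun x : Fin s → Y => ∏ i, v i (x i)) ∈
      Submodule.span ℂ {w : (Fin s → Y) → ℂ | ∃ u : Fin s → (Y → ℂ),
        (∀ i, u i ∈ V) ∧ w = fun x => ∏ i, u i (x i)} := by
  choose m c g hg using fun i => (Submodule.mem_span_set'.mp (hv i))
  have hv' : v = fun i => ∑ k : Fin (m i), c i k • (g i k : Y → ℂ) := by
    funext i; exact (hg i).symm
  have h1 : (fun x : Fin s → Y => ∏ i, v i (x i)) = tensorML Y s v := by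
    funext x; rw [tensorML_apply]
  rw [h1, hv', (tensorML Y s).map_sum]
  refine Submodule.sum_mem _ fun r _ => ?_
  rw [(tensorML Y s).map_smul_univ]
  refine Submodule.smul_mem _ _ (Submodule.subset_span ?_)
  exact ⟨fun i => g i (r i), fun i => (g i (r i)).2, by funext x; rw [tensorML_apply]⟩

/-- Tensor products of elements of `VSet n θ r`, reindexed, lie in `VSet (n*s) θ (r*s)`. -/
lemma tensor_VSet_mem {A E : Type} (θ : A × E → ℂ) {n r s : ℕ}
    (e : Fin s × Fin n ≃ Fin (n * s))
    (u : Fin s → ((Fin n → A × E) → ℂ)) (hu : ∀ i, u i ∈ VSet n θ r) :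
    (fun x : Fin (n * s) → A × E => ∏ i, u i (fun j => x (e (i, j)))) ∈
      VSet (n * s) θ (r * s) := by
  choose Sf hcard Ω hΩ using hu
  set S : Finset (Fin (n * s)) :=
    Finset.univ.filter (fun k => (e.symm k).2 ∈ Sf (e.symm k).1) with hS
  have hnotmem : ∀ (i : Fin s) (j : {j : Fin n // j ∉ Sf i}), e (i, j.1) ∉ S := by
    intro i j h
    rw [hS, Finset.mem_filter] at h
    exact j.2 (by simpa using h.2)
  refine ⟨S, ?_, fun y => ∏ i, Ω i (fun j => y ⟨e (i, j.1), hnotmem i j⟩), fun x => ?_⟩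
  · have h1 : S.card = ∑ k : Fin (n * s),
        if (e.symm k).2 ∈ Sf (e.symm k).1 then 1 else 0 := by
      rw [hS, Finset.card_filter]
    rw [h1, ← Equiv.sum_comp e (fun k => if (e.symm k).2 ∈ Sf (e.symm k).1 then 1 else 0)]
    simp only [Equiv.symm_apply_apply]
    rw [Fintype.sum_prod_type]
    have h2 : ∀ i : Fin s, (∑ j : Fin n, if j ∈ Sf i then 1 else 0) = n - r := by
      intro i
      rw [Finset.sum_ite_mem, Finset.univ_inter, Finset.sum_const, smul_eq_mul,
        mul_one, hcard]
    simp only [h2, Finset.sum_const, Finset.card_univ, Fintype.card_fin, smul_eq_mul]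
    rw [mul_comm s (n - r), Nat.sub_mul]
  · have h3 : ∀ i : Fin s, u i (fun j => x (e (i, j))) =
        (∏ j ∈ Sf i, θ (x (e (i, j)))) * Ω i (fun j => x (e (i, j.1))) := fun i =>
      hΩ i (fun j => x (e (i, j)))
    show (∏ i : Fin s, u i (fun j => x (e (i, j)))) = _
    rw [Finset.prod_congr rfl (fun i _ => h3 i), Finset.prod_mul_distrib]
    congr 1
    have h4 : (∏ k ∈ S, θ (x k)) = ∏ k : Fin (n * s),
        if (e.symm k).2 ∈ Sf (e.symm k).1 then θ (x k) else 1 := by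
      rw [hS, Finset.prod_filter]
    rw [h4, ← Equiv.prod_comp e
      (fun k => if (e.symm k).2 ∈ Sf (e.symm k).1 then θ (x k) else 1)]
    simp only [Equiv.symm_apply_apply]
    rw [Fintype.prod_prod_type]
    refine (Finset.prod_congr rfl fun i _ => ?_).symm
    rw [← Finset.prod_filter]
    congr 1
    ext a
    simp

/-- The canonical equivalence used to reindex tensor powers. -/
def curryE {X : Type} {n s : ℕ} (e : Fin s × Fin n ≃ Fin (n * s)) :
    (Fin (n * s) → X) ≃ (Fin s → Fin n → X) where
  toFun u i j := u (e (i, j))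
  invFun z k := z (e.symm k).1 (e.symm k).2
  left_inv u := by funext k; simp
  right_inv z := by funext i j; simp

lemma tensorPowReindexed_eq_submatrix {A : Type} (n s : ℕ)
    (e : Fin s × Fin n ≃ Fin (n * s)) (M : Matrix (Fin n → A) (Fin n → A) ℂ) :
    tensorPowReindexed n s e M = (tensorPow M s).submatrix (curryE e) (curryE e) := rfl

lemma tensorPow_conjTranspose_mul {X : Type} [Fintype X] [DecidableEq X]
    (B : Matrix X X ℂ) (s : ℕ) :
    tensorPow (Bᴴ * B) s = (tensorPow B s)ᴴ * (tensorPow B s) := by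
  funext x y
  simp only [tensorPow, Matrix.mul_apply, Matrix.conjTranspose_apply]
  rw [Finset.prod_univ_sum, Fintype.piFinset_univ]
  refine Finset.sum_congr rfl fun z _ => ?_
  rw [star_prod, Finset.prod_mul_distrib]

lemma tensorPow_trace {X : Type} [Fintype X] [DecidableEq X]
    (M : Matrix X X ℂ) (s : ℕ) : (tensorPow M s).trace = M.trace ^ s := by
  simp only [Matrix.trace, Matrix.diag, tensorPow]
  rw [show (∑ x : X, M x x) ^ s = ∏ _i : Fin s, ∑ x : X, M x x by
    rw [Finset.prod_const, Finset.card_univ, Fintype.card_fin],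
    Finset.prod_univ_sum, Fintype.piFinset_univ]

lemma trace_submatrix_equiv' {m l : Type} [Fintype m] [Fintype l]
    (M : Matrix l l ℂ) (f : m ≃ l) : (M.submatrix f f).trace = M.trace := by
  simp only [Matrix.trace, Matrix.diag, Matrix.submatrix_apply]
  exact Fintype.sum_equiv f _ _ fun x => rfl

/-- tensor powers of generalized-almost-iid states are
generalized-almost-iid. -/
theorem almostIID_tensor_power
    {A E : Type} [Fintype A] [DecidableEq A] [Fintype E] [DecidableEq E]
    (θ : A × E → ℂ) (hθ : IsUnitVec θ)
    (n r s : ℕ) (hr : r ≤ n) (hs : 1 ≤ s)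
    (ρ : Matrix (Fin n → A) (Fin n → A) ℂ) (hρ : IsDensity ρ)
    (ρhat : Matrix (Fin n → A × E) (Fin n → A × E) ℂ) (hρhat : IsDensity ρhat)
    (hext : ptraceE ρhat = ρ)
    (hrange : RangeInSpan ρhat (VSet n θ r))
    (e : Fin s × Fin n ≃ Fin (n * s)) :
    IsDensity (tensorPowReindexed n s e ρhat) ∧
    ptraceE (tensorPowReindexed n s e ρhat) = tensorPowReindexed n s e ρ ∧
    RangeInSpan (tensorPowReindexed n s e ρhat) (VSet (n * s) θ (r * s)) := by
  obtain ⟨hpsd, htr⟩ := hρhat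
  have hrw := tensorPowReindexed_eq_submatrix n s e ρhat
  have hTpsd : (tensorPow ρhat s).PosSemidef := by
    open scoped MatrixOrder in
    have h1 : ρhat = (CFC.sqrt ρhat)ᴴ * CFC.sqrt ρhat := by
      rw [(CFC.sqrt_nonneg ρhat).posSemidef.1.eq, CFC.sqrt_mul_sqrt_self ρhat hpsd.nonneg]
    rw [h1, tensorPow_conjTranspose_mul]
    exact Matrix.posSemidef_conjTranspose_mul_self _
  refine ⟨⟨?_, ?_⟩, ?_, ?_⟩
  · rw [hrw]; exact hTpsd.submatrix _
  · rw [hrw, trace_submatrix_equiv', tensorPow_trace, htr, one_pow]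
  · funext a a'
    have hR : tensorPowReindexed n s e ρ a a' =
        ∑ η : Fin s → Fin n → E, ∏ i, ρhat (fun j => (a (e (i, j)), η i j))
          (fun j => (a' (e (i, j)), η i j)) := by
      rw [← hext]
      simp only [tensorPowReindexed, ptraceE]
      rw [Finset.prod_univ_sum, Fintype.piFinset_univ]
    rw [hR]
    exact Fintype.sum_equiv (curryE e) _ _ (fun ε => rfl)
  · intro w hw
    obtain ⟨v, rfl⟩ := LinearMap.mem_range.mp hw
    have key : (tensorPowReindexed n s e ρhat).mulVec v =
        LinearMap.funLeft ℂ ℂ (curryE e)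
          ((tensorPow ρhat s).mulVec (fun z => v ((curryE e).symm z))) := by
      funext u
      simp only [LinearMap.funLeft_apply, Matrix.mulVec, dotProduct,
        tensorPowReindexed, tensorPow]
      refine Fintype.sum_equiv (curryE e) _ _ fun w => ?_
      simp [curryE]
    have mem1 : (tensorPow ρhat s).mulVec (fun z => v ((curryE e).symm z)) ∈
        Submodule.span ℂ {w : (Fin s → (Fin n → A × E)) → ℂ |
          ∃ u : Fin s → ((Fin n → A × E) → ℂ),
            (∀ i, u i ∈ VSet n θ r) ∧ w = fun x => ∏ i, u i (x i)} := by
      have expand : (tensorPow ρhat s).mulVec (fun z => v ((curryE e).symm z)) =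
          ∑ y : Fin s → (Fin n → A × E), v ((curryE e).symm y) •
            (fun x : Fin s → (Fin n → A × E) => ∏ i, ρhat (x i) (y i)) := by
        funext x
        simp only [Matrix.mulVec, dotProduct, tensorPow, Finset.sum_apply,
          Pi.smul_apply, smul_eq_mul]
        exact Finset.sum_congr rfl fun y _ => mul_comm _ _
      rw [expand]
      refine Submodule.sum_mem _ fun y _ => Submodule.smul_mem _ _ ?_
      have hv : ∀ i, (fun b => ρhat b (y i)) ∈ Submodule.span ℂ (VSet n θ r) := by
        intro i
        have hcol : (fun b => ρhat b (y i)) = ρhat.mulVec (Pi.single (y i) 1) := by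
          funext b; simp [Matrix.mulVec, dotProduct, Pi.single_apply]
        rw [hcol]
        exact hrange (LinearMap.mem_range.mpr ⟨Pi.single (y i) 1, rfl⟩)
      exact tensor_mem_span (VSet n θ r) (fun i b => ρhat b (y i)) hv
    have himg : (⇑(LinearMap.funLeft ℂ ℂ (⇑(curryE e))) ''
        {w : (Fin s → (Fin n → A × E)) → ℂ | ∃ u : Fin s → ((Fin n → A × E) → ℂ),
          (∀ i, u i ∈ VSet n θ r) ∧ w = fun x => ∏ i, u i (x i)}) ⊆
        VSet (n * s) θ (r * s) := by
      rintro _ ⟨w, ⟨u, hu, rfl⟩, rfl⟩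
      exact tensor_VSet_mem θ e u hu
    have hmem2 := Submodule.mem_map_of_mem
      (f := LinearMap.funLeft ℂ ℂ (⇑(curryE e))) mem1
    rw [Submodule.map_span] at hmem2
    have hle : Submodule.span ℂ (⇑(LinearMap.funLeft ℂ ℂ (⇑(curryE e))) ''
        {w : (Fin s → (Fin n → A × E)) → ℂ | ∃ u : Fin s → ((Fin n → A × E) → ℂ),
          (∀ i, u i ∈ VSet n θ r) ∧ w = fun x => ∏ i, u i (x i)}) ≤
        Submodule.span ℂ (VSet (n * s) θ (r * s)) :=
      Submodule.span_le.mpr (himg.trans Submodule.subset_span)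
    have : Matrix.mulVecLin (tensorPowReindexed n s e ρhat) v =
        LinearMap.funLeft ℂ ℂ (⇑(curryE e))
          ((tensorPow ρhat s).mulVec (fun z => v ((curryE e).symm z))) := by
      rw [Matrix.mulVecLin_apply, key]
    rw [this]
    exact hle hmem2


end
end

section
/- Let A and E be finite types, σ a density matrix on ℂ^A, and n, r ∈ ℕ with r ≤ n. Let θ, θ̃ ∈ ℂ^(A × E) be two unit vectors with tr_E |θ⟩⟨θ| = tr_E |θ̃⟩⟨θ̃| = σ. If a density matrix ρ on ℂ^(Fin n → A) admits an extension ρ̂ on ℂ^(Fin n → A × E) (a density matrix whose partial trace over the E-components equals ρ) that is invariant under the simultaneous permutation action of every permutation of Fin n and whose range is contained in the linear span of V(n, θ, r), then ρ also admits an extension on ℂ^(Fin n → A × E) that is invariant under the simultaneous permutation action of every permutation of Fin n and whose range is contained in the linear span of V(n, θ̃, r). -/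
open Matrix BigOperators Kronecker Filter
open scoped Classical ComplexOrder

noncomputable section

/-! ### Auxiliary lemmas -/

section Aux

set_option maxHeartbeats 1000000

lemma exists_unitary_of_gram_eq' {A E : Type} [Fintype A] [DecidableEq A] [Fintype E] [DecidableEq E]
    (M N : Matrix A E ℂ) (h : M * Mᴴ = N * Nᴴ) :
    ∃ U : Matrix E E ℂ, Uᴴ * U = 1 ∧ U * Uᴴ = 1 ∧ U * Mᴴ = Nᴴ := by
  set f : EuclideanSpace ℂ A →ₗ[ℂ] EuclideanSpace ℂ E := Matrix.toEuclideanLin Mᴴ with hf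
  set g : EuclideanSpace ℂ A →ₗ[ℂ] EuclideanSpace ℂ E := Matrix.toEuclideanLin Nᴴ with hg
  have key : ∀ (P : Matrix A E ℂ) (x : EuclideanSpace ℂ A),
      (inner ℂ (Matrix.toEuclideanLin Pᴴ x) (Matrix.toEuclideanLin Pᴴ x) : ℂ)
        = dotProduct (star (WithLp.equiv 2 (A → ℂ) x)) ((P * Pᴴ) *ᵥ (WithLp.equiv 2 (A → ℂ) x)) := by
    intro P x
    rw [EuclideanSpace.inner_eq_star_dotProduct]
    simp only [Matrix.toEuclideanLin_apply, Equiv.apply_symm_apply]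
    rw [dotProduct_comm, Matrix.star_mulVec, Matrix.conjTranspose_conjTranspose,
      ← Matrix.mulVec_mulVec, dotProduct_mulVec]
    rw [dotProduct_mulVec, dotProduct_mulVec]
    rfl
  have hinner : ∀ x : EuclideanSpace ℂ A, (inner ℂ (f x) (f x) : ℂ) = inner ℂ (g x) (g x) := by
    intro x; rw [hf, hg, key, key, h]
  have hnorm : ∀ x : EuclideanSpace ℂ A, ‖f x‖ = ‖g x‖ := by
    intro x
    rw [@norm_eq_sqrt_re_inner ℂ, @norm_eq_sqrt_re_inner ℂ, hinner]
  have hker : LinearMap.ker f ≤ LinearMap.ker g := by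
    intro x hx
    rw [LinearMap.mem_ker] at hx ⊢
    have := hnorm x
    rw [hx, norm_zero] at this
    exact norm_eq_zero.mp this.symm
  set φ₀ : LinearMap.range f →ₗ[ℂ] EuclideanSpace ℂ E :=
    ((LinearMap.ker f).liftQ g hker) ∘ₗ (f.quotKerEquivRange).symm.toLinearMap with hφ₀
  have hφ₀f : ∀ x : EuclideanSpace ℂ A, φ₀ ⟨f x, LinearMap.mem_range_self f x⟩ = g x := by
    intro x
    have h1 : (f.quotKerEquivRange).symm ⟨f x, LinearMap.mem_range_self f x⟩
        = Submodule.Quotient.mk x := by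
      rw [LinearEquiv.symm_apply_eq]
      exact Subtype.ext (f.quotKerEquivRange_apply_mk x)
    simp [hφ₀, h1]
  have hφnorm : ∀ s : LinearMap.range f, ‖φ₀ s‖ = ‖s‖ := by
    rintro ⟨s, x, rfl⟩
    rw [hφ₀f x]
    rw [show ‖(⟨f x, LinearMap.mem_range_self f x⟩ : LinearMap.range f)‖ = ‖f x‖ from rfl]
    exact (hnorm x).symm
  set φ : LinearMap.range f →ₗᵢ[ℂ] EuclideanSpace ℂ E := ⟨φ₀, hφnorm⟩ with hφ
  set T := φ.extend with hT
  have hTf : ∀ x, T (f x) = g x := by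
    intro x
    have := φ.extend_apply ⟨f x, LinearMap.mem_range_self f x⟩
    rw [this, hφ]
    exact hφ₀f x
  set U : Matrix E E ℂ := Matrix.toEuclideanLin.symm T.toLinearMap with hU
  have hUlin : Matrix.toEuclideanLin U = T.toLinearMap := Matrix.toEuclideanLin.apply_symm_apply _
  have hUmulVec : ∀ v : E → ℂ, U *ᵥ v = WithLp.equiv 2 (E → ℂ) (T ((WithLp.equiv 2 (E → ℂ)).symm v)) := by
    intro v
    have := congrArg (fun (L : EuclideanSpace ℂ E →ₗ[ℂ] EuclideanSpace ℂ E) =>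
      WithLp.equiv 2 (E → ℂ) (L ((WithLp.equiv 2 (E → ℂ)).symm v))) hUlin
    simpa [Matrix.toEuclideanLin_apply] using this
  have hUM : U * Mᴴ = Nᴴ := by
    ext e a
    have h1 : (U * Mᴴ) *ᵥ (Pi.single a 1) = Nᴴ *ᵥ (Pi.single a 1) := by
      rw [← Matrix.mulVec_mulVec, hUmulVec]
      have hfx : (Matrix.toEuclideanLin Mᴴ) ((WithLp.equiv 2 (A → ℂ)).symm (Pi.single a 1))
          = (WithLp.equiv 2 (E → ℂ)).symm (Mᴴ *ᵥ Pi.single a 1) := by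
        simp [Matrix.toEuclideanLin_apply]
      have h2 := hTf ((WithLp.equiv 2 (A → ℂ)).symm (Pi.single a 1))
      rw [hfx] at h2
      rw [h2]
      simp [hg, Matrix.toEuclideanLin_apply]
    have h2 := congrFun h1 e
    simpa [Matrix.mulVec_single] using h2
  have hTinner : ∀ v w : E → ℂ,
      dotProduct (star (U *ᵥ v)) (U *ᵥ w) = dotProduct (star v) w := by
    intro v w
    have := T.inner_map_map ((WithLp.equiv 2 (E → ℂ)).symm v) ((WithLp.equiv 2 (E → ℂ)).symm w)
    rw [EuclideanSpace.inner_eq_star_dotProduct, EuclideanSpace.inner_eq_star_dotProduct] at this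
    rw [dotProduct_comm _ (star _), dotProduct_comm _ (star _)] at this
    simpa [hUmulVec] using this
  have hUU : Uᴴ * U = 1 := by
    ext e e'
    have h3 := hTinner (Pi.single e 1) (Pi.single e' 1)
    simp only [Matrix.mulVec_single, Pi.smul_apply, op_smul_eq_mul, Matrix.col_apply, mul_one, dotProduct, Pi.star_apply,
      Pi.single_apply, ite_mul, one_mul, zero_mul,
      mul_ite, mul_one, mul_zero] at h3
    simp only [Matrix.mul_apply, Matrix.conjTranspose_apply, Matrix.one_apply]
    rw [h3]
    simp [apply_ite (star : ℂ → ℂ), eq_comm]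
  exact ⟨U, hUU, mul_eq_one_comm.mp hUU, hUM⟩

variable {X : Type} [Fintype X] [DecidableEq X]

lemma prod_ite_eq_ite {n : ℕ} {D : Type} (a b : Fin n → D) [DecidableEq D] :
    (∏ i, if a i = b i then (1 : ℂ) else 0) = if a = b then 1 else 0 := by
  by_cases h : a = b
  · subst h; simp
  · obtain ⟨i, hi⟩ := Function.ne_iff.mp h
    rw [if_neg h]
    exact Finset.prod_eq_zero (Finset.mem_univ i) (if_neg hi)

lemma tensorPow_mul (A B : Matrix X X ℂ) (s : ℕ) :
    tensorPow A s * tensorPow B s = tensorPow (A * B) s := by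
  ext x y
  simp only [Matrix.mul_apply, tensorPow]
  rw [Finset.prod_univ_sum (fun _ => (Finset.univ : Finset X))
    (fun i j => A (x i) j * B j (y i)), Fintype.piFinset_univ]
  exact Finset.sum_congr rfl fun z _ => Finset.prod_mul_distrib.symm

lemma tensorPow_conjTranspose (A : Matrix X X ℂ) (s : ℕ) :
    (tensorPow A s)ᴴ = tensorPow Aᴴ s := by
  ext x y
  simp [tensorPow, Matrix.conjTranspose_apply, map_prod]

lemma tensorPow_one (s : ℕ) : tensorPow (1 : Matrix X X ℂ) s = 1 := by
  ext x y
  simp only [tensorPow, Matrix.one_apply]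
  exact prod_ite_eq_ite x y

lemma tensorPow_comp_perm (A : Matrix X X ℂ) {s : ℕ} (π : Equiv.Perm (Fin s))
    (x y : Fin s → X) : tensorPow A s (x ∘ π) (y ∘ π) = tensorPow A s x y := by
  simp only [tensorPow, Function.comp_apply]
  exact Equiv.prod_comp π (fun i => A (x i) (y i))

lemma sum_comp_perm {D : Type} [Fintype D] {n : ℕ} (π : Equiv.Perm (Fin n))
    (F : (Fin n → D) → ℂ) : ∑ z : Fin n → D, F (z ∘ π) = ∑ z : Fin n → D, F z := by
  let pe : (Fin n → D) ≃ (Fin n → D) :=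
    { toFun := fun z => z ∘ π
      invFun := fun z => z ∘ π.symm
      left_inv := fun z => by ext i; simp
      right_inv := fun z => by ext i; simp }
  exact Fintype.sum_bijective pe pe.bijective _ _ (fun z => rfl)

lemma PermInvariant.matmul {D : Type} [Fintype D] {n : ℕ}
    {P Q : Matrix (Fin n → D) (Fin n → D) ℂ}
    (hP : PermInvariant P) (hQ : PermInvariant Q) : PermInvariant (P * Q) := by
  intro π x y
  simp only [Matrix.mul_apply]
  rw [← sum_comp_perm π (fun z => P (x ∘ π) z * Q z (y ∘ π))]
  exact Finset.sum_congr rfl fun z _ => by rw [hP π x z, hQ π z y]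

lemma PermInvariant.conjT {D : Type} [Fintype D] {n : ℕ}
    {P : Matrix (Fin n → D) (Fin n → D) ℂ}
    (hP : PermInvariant P) : PermInvariant Pᴴ := by
  intro π x y
  simp only [Matrix.conjTranspose_apply]
  rw [hP]

lemma tensorPow_permInvariant (A : Matrix X X ℂ) (s : ℕ) :
    PermInvariant (tensorPow A s) :=
  fun π x y => tensorPow_comp_perm A π x y

/-- Summation over pair-valued functions as a double sum. -/
lemma sum_pairfun {A E : Type} [Fintype A] [Fintype E] {n : ℕ} (F : (Fin n → A × E) → ℂ) :
    ∑ z : Fin n → A × E, F z = ∑ b : Fin n → A, ∑ f : Fin n → E, F (fun i => (b i, f i)) := by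
  rw [← Equiv.sum_comp (Equiv.arrowProdEquivProdArrow (Fin n) (fun _ => A) (fun _ => E)).symm F, Fintype.sum_prod_type]
  rfl

end Aux

section Main

variable {A E : Type} [Fintype A] [DecidableEq A] [Fintype E] [DecidableEq E]

/-- The local unitary `1 ⊗ (Uᴴ)ᵀ` on `A × E`. -/
def Gmat (U : Matrix E E ℂ) : Matrix (A × E) (A × E) ℂ :=
  fun p q => (if p.1 = q.1 then 1 else 0) * Uᴴ q.2 p.2

lemma Gmat_tensorPow_apply (U : Matrix E E ℂ) {n : ℕ}
    (a b : Fin n → A) (e f : Fin n → E) :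
    tensorPow (Gmat U) n (fun i => (a i, e i)) (fun i => (b i, f i))
      = (if a = b then 1 else 0) * ∏ i, Uᴴ (f i) (e i) := by
  simp only [tensorPow, Gmat]
  rw [Finset.prod_mul_distrib, prod_ite_eq_ite]

set_option maxHeartbeats 1000000 in
lemma Gmat_unitary (U : Matrix E E ℂ) (hUU : Uᴴ * U = 1) :
    (Gmat U (A := A))ᴴ * Gmat U = 1 := by
  ext p q
  obtain ⟨a, e⟩ := p
  obtain ⟨b, f⟩ := q
  simp only [Matrix.mul_apply, Matrix.conjTranspose_apply, Gmat]
  rw [Fintype.sum_prod_type]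
  have h1 : ∀ c : A, ∀ g : E,
      star ((if c = a then (1:ℂ) else 0) * star (U g e)) * ((if c = b then 1 else 0) * star (U g f))
        = ((if c = a then 1 else 0) * (if c = b then 1 else 0)) * (star (U g f) * U g e) := by
    intro c g
    simp only [star_mul', star_star, apply_ite (star : ℂ → ℂ), star_one, star_zero]
    ring
  simp only [h1]
  rw [← Finset.sum_mul_sum]
  have h2 : (∑ c : A, (if c = a then (1:ℂ) else 0) * (if c = b then 1 else 0))
      = if a = b then 1 else 0 := by
    simp [Finset.sum_ite_eq', apply_ite, eq_comm]
  have h3 : (∑ g : E, star (U g f) * U g e) = if f = e then 1 else 0 := by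
    rw [show (∑ g : E, star (U g f) * U g e) = (Uᴴ * U) f e by
      simp [Matrix.mul_apply, Matrix.conjTranspose_apply], hUU, Matrix.one_apply]
  rw [h2, h3, Matrix.one_apply]
  by_cases hab : a = b <;> by_cases hef : e = f <;>
    simp [hab, hef, Prod.ext_iff, eq_comm]

set_option maxHeartbeats 1000000 in
lemma ptraceE_Gmat_conj {n : ℕ} (U : Matrix E E ℂ) (hUU : Uᴴ * U = 1)
    (ρ : Matrix (Fin n → A × E) (Fin n → A × E) ℂ) :
    ptraceE (tensorPow (Gmat U) n * ρ * (tensorPow (Gmat U) n)ᴴ) = ptraceE ρ := by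
  have hK : tensorPow (Uᴴ) n * (tensorPow (Uᴴ) n)ᴴ = 1 := by
    rw [tensorPow_conjTranspose, Matrix.conjTranspose_conjTranspose, tensorPow_mul, hUU,
      tensorPow_one]
  ext a a'
  simp only [ptraceE, Matrix.mul_apply, Matrix.conjTranspose_apply]
  calc
    ∑ e : Fin n → E, ∑ w, (∑ z, tensorPow (Gmat U) n (fun i => (a i, e i)) z * ρ z w) *
        (starRingEnd ℂ) (tensorPow (Gmat U) n (fun i => (a' i, e i)) w)
      = ∑ e : Fin n → E, ∑ b' : Fin n → A, ∑ f' : Fin n → E, ∑ b : Fin n → A, ∑ f : Fin n → E,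
          (((if a = b then 1 else 0) * ∏ i, Uᴴ (f i) (e i)) *
            ρ (fun i => (b i, f i)) (fun i => (b' i, f' i))) *
          (starRingEnd ℂ) ((if a' = b' then 1 else 0) * ∏ i, Uᴴ (f' i) (e i)) := by
        refine Finset.sum_congr rfl fun e _ => ?_
        rw [sum_pairfun (fun w => (∑ z, tensorPow (Gmat U) n (fun i => (a i, e i)) z * ρ z w) *
          (starRingEnd ℂ) (tensorPow (Gmat U) n (fun i => (a' i, e i)) w))]
        refine Finset.sum_congr rfl fun b' _ => Finset.sum_congr rfl fun f' _ => ?_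
        rw [Gmat_tensorPow_apply,
          sum_pairfun (fun z => tensorPow (Gmat U) n (fun i => (a i, e i)) z *
            ρ z (fun i => (b' i, f' i))), Finset.sum_mul]
        refine Finset.sum_congr rfl fun b _ => ?_
        rw [Finset.sum_mul]
        refine Finset.sum_congr rfl fun f _ => ?_
        rw [Gmat_tensorPow_apply]
    _ = ∑ e : Fin n → E, ∑ f' : Fin n → E, ∑ f : Fin n → E,
          ((∏ i, Uᴴ (f i) (e i)) * ρ (fun i => (a i, f i)) (fun i => (a' i, f' i))) *
          (starRingEnd ℂ) (∏ i, Uᴴ (f' i) (e i)) := by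
        refine Finset.sum_congr rfl fun e _ => ?_
        rw [Fintype.sum_eq_single a' (fun b' hb' => ?_)]
        · refine Finset.sum_congr rfl fun f' _ => ?_
          rw [Fintype.sum_eq_single a (fun b hb => ?_)]
          · refine Finset.sum_congr rfl fun f _ => ?_
            simp
          · exact Finset.sum_eq_zero fun f _ => by
              simp [if_neg (Ne.symm hb)]
        · exact Finset.sum_eq_zero fun f' _ => Finset.sum_eq_zero fun b _ =>
            Finset.sum_eq_zero fun f _ => by simp [if_neg (Ne.symm hb')]
    _ = ∑ f' : Fin n → E, ∑ e : Fin n → E, ∑ f : Fin n → E,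
          ((∏ i, Uᴴ (f i) (e i)) * ρ (fun i => (a i, f i)) (fun i => (a' i, f' i))) *
          (starRingEnd ℂ) (∏ i, Uᴴ (f' i) (e i)) := Finset.sum_comm
    _ = ∑ f' : Fin n → E, ∑ f : Fin n → E, ∑ e : Fin n → E,
          ((∏ i, Uᴴ (f i) (e i)) * ρ (fun i => (a i, f i)) (fun i => (a' i, f' i))) *
          (starRingEnd ℂ) (∏ i, Uᴴ (f' i) (e i)) :=
        Finset.sum_congr rfl fun f' _ => Finset.sum_comm
    _ = ∑ f : Fin n → E, ∑ f' : Fin n → E, ∑ e : Fin n → E,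
          ((∏ i, Uᴴ (f i) (e i)) * ρ (fun i => (a i, f i)) (fun i => (a' i, f' i))) *
          (starRingEnd ℂ) (∏ i, Uᴴ (f' i) (e i)) := Finset.sum_comm
    _ = ∑ f : Fin n → E, ∑ f' : Fin n → E,
          ρ (fun i => (a i, f i)) (fun i => (a' i, f' i)) *
          ((tensorPow (Uᴴ) n * (tensorPow (Uᴴ) n)ᴴ) f f') := by
        refine Finset.sum_congr rfl fun f _ => Finset.sum_congr rfl fun f' _ => ?_
        rw [Matrix.mul_apply, Finset.mul_sum]
        refine Finset.sum_congr rfl fun e _ => ?_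
        simp only [tensorPow, Matrix.conjTranspose_apply, starRingEnd_apply]
        ring
    _ = ∑ f : Fin n → E, ρ (fun i => (a i, f i)) (fun i => (a' i, f i)) := by
        refine Finset.sum_congr rfl fun f _ => ?_
        rw [hK]
        rw [Fintype.sum_eq_single f (fun f' hf' => by
          rw [Matrix.one_apply_ne (Ne.symm hf'), mul_zero])]
        rw [Matrix.one_apply_eq, mul_one]

set_option maxHeartbeats 1000000 in
lemma mulVec_tensorPow_mem_VSet {D : Type} [Fintype D] [DecidableEq D] {n r : ℕ}
    (G : Matrix D D ℂ) {θ θ' : D → ℂ} (hG : G *ᵥ θ = θ')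
    {v : (Fin n → D) → ℂ} (hv : v ∈ VSet n θ r) :
    (tensorPow G n) *ᵥ v ∈ VSet n θ' r := by
  obtain ⟨S, hS, Ω, hΩ⟩ := hv
  refine ⟨S, hS, fun y => ∑ w : ({i : Fin n // i ∉ S} → D),
    (∏ i : {i : Fin n // i ∉ S}, G (y i) (w i)) * Ω w, fun x => ?_⟩
  have hmv : (tensorPow G n *ᵥ v) x = ∑ z : Fin n → D, (∏ i, G (x i) (z i)) * v z := rfl
  rw [hmv]
  have hsplit : ∀ z : Fin n → D, (∏ i, G (x i) (z i)) * v z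
      = (∏ i ∈ S, (G (x i) (z i) * θ (z i))) *
        ((∏ i ∈ Sᶜ, G (x i) (z i)) * Ω (fun i => z i.1)) := by
    intro z
    rw [hΩ z, ← Finset.prod_mul_prod_compl S (fun i => G (x i) (z i)), mul_mul_mul_comm,
      ← Finset.prod_mul_distrib]
  simp only [hsplit]
  calc
    ∑ z : Fin n → D, (∏ i ∈ S, (G (x i) (z i) * θ (z i))) *
        ((∏ i ∈ Sᶜ, G (x i) (z i)) * Ω (fun i => z i.1))
      = ∑ p : ({i : Fin n // i ∈ S} → D) × ({i : Fin n // ¬ i ∈ S} → D),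
          (∏ i : {i : Fin n // i ∈ S}, (G (x i) (p.1 i) * θ (p.1 i))) *
          ((∏ i : {i : Fin n // ¬ i ∈ S}, G (x i) (p.2 i)) * Ω p.2) := by
        refine Fintype.sum_equiv (Equiv.piEquivPiSubtypeProd (fun i : Fin n => i ∈ S)
          (fun _ => D)) _ _ fun z => ?_
        show (∏ i ∈ S, (G (x i) (z i) * θ (z i))) *
            ((∏ i ∈ Sᶜ, G (x i) (z i)) * Ω (fun i => z i.1))
          = (∏ i : {i : Fin n // i ∈ S}, (G (x i.1) (z i.1) * θ (z i.1))) *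
            ((∏ i : {i : Fin n // ¬ i ∈ S}, G (x i.1) (z i.1)) * Ω (fun i => z i.1))
        rw [Finset.prod_subtype S (fun i => Iff.rfl) (fun i => G (x i) (z i) * θ (z i)),
          Finset.prod_subtype Sᶜ (fun i => Finset.mem_compl) (fun i => G (x i) (z i))]
    _ = (∑ u : {i : Fin n // i ∈ S} → D,
          ∏ i : {i : Fin n // i ∈ S}, (G (x i) (u i) * θ (u i))) *
        (∑ w : {i : Fin n // ¬ i ∈ S} → D,
          (∏ i : {i : Fin n // ¬ i ∈ S}, G (x i) (w i)) * Ω w) := by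
        rw [Finset.sum_mul_sum, Fintype.sum_prod_type]
    _ = (∏ i ∈ S, θ' (x i)) * ∑ w : {i : Fin n // i ∉ S} → D,
          (∏ i : {i : Fin n // i ∉ S}, G (x i) (w i)) * Ω w := by
        congr 1
        have hθ'd : ∀ i : {i : Fin n // i ∈ S}, θ' (x i.1) = ∑ d : D, G (x i.1) d * θ d := by
          intro i; rw [← congrFun hG (x i.1)]; rfl
        rw [Finset.prod_subtype S (fun i => Iff.rfl) (fun i => θ' (x i)),
          show (∏ i : {i : Fin n // i ∈ S}, θ' (x i.1))
              = ∏ i : {i : Fin n // i ∈ S}, ∑ d : D, G (x i.1) d * θ d from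
            Finset.prod_congr rfl fun i _ => hθ'd i,
          Finset.prod_univ_sum, Fintype.piFinset_univ]

end Main
/-- the witnessing extension of an almost-iid state can be chosen with
respect to any purification of `σ`. -/
theorem almostIID_any_purification
    {A E : Type} [Fintype A] [DecidableEq A] [Fintype E] [DecidableEq E]
    (σ : Matrix A A ℂ) (hσ : IsDensity σ)
    (n r : ℕ) (hr : r ≤ n)
    (θ θ' : A × E → ℂ) (hθ : IsUnitVec θ) (hθ' : IsUnitVec θ')
    (hθpur : ptraceSnd (outer θ θ) = σ) (hθ'pur : ptraceSnd (outer θ' θ') = σ)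
    (ρ : Matrix (Fin n → A) (Fin n → A) ℂ) (hρ : IsDensity ρ)
    (ρhat : Matrix (Fin n → A × E) (Fin n → A × E) ℂ) (hρhat : IsDensity ρhat)
    (hext : ptraceE ρhat = ρ) (hperm : PermInvariant ρhat)
    (hrange : RangeInSpan ρhat (VSet n θ r)) :
    ∃ ρhat' : Matrix (Fin n → A × E) (Fin n → A × E) ℂ,
      IsDensity ρhat' ∧ ptraceE ρhat' = ρ ∧ PermInvariant ρhat' ∧
      RangeInSpan ρhat' (VSet n θ' r) := by
  classical
  set M : Matrix A E ℂ := Matrix.of (fun a e => θ (a, e)) with hM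
  set N : Matrix A E ℂ := Matrix.of (fun a e => θ' (a, e)) with hN
  have hgram : M * Mᴴ = N * Nᴴ := by
    ext a a'
    have h1 : (M * Mᴴ) a a' = ptraceSnd (outer θ θ) a a' := by
      simp [Matrix.mul_apply, Matrix.conjTranspose_apply, ptraceSnd, outer, hM]
    have h2 : (N * Nᴴ) a a' = ptraceSnd (outer θ' θ') a a' := by
      simp [Matrix.mul_apply, Matrix.conjTranspose_apply, ptraceSnd, outer, hN]
    rw [h1, h2, hθpur, hθ'pur]
  obtain ⟨U, hUU, hUU', hUM⟩ := exists_unitary_of_gram_eq' M N hgram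
  have hNM : (N : Matrix A E ℂ) = M * Uᴴ := by
    have h := congrArg Matrix.conjTranspose hUM
    rw [Matrix.conjTranspose_mul, Matrix.conjTranspose_conjTranspose,
      Matrix.conjTranspose_conjTranspose] at h
    exact h.symm
  have hGθ : Gmat U (A := A) *ᵥ θ = θ' := by
    funext p
    obtain ⟨a, e⟩ := p
    have hθ'ae : θ' (a, e) = ∑ f : E, θ (a, f) * Uᴴ f e := by
      have := congrFun (congrFun hNM a) e
      simpa [Matrix.mul_apply, hM, hN] using this
    rw [show (Gmat U (A := A) *ᵥ θ) (a, e) = ∑ q : A × E, Gmat U (a, e) q * θ q from rfl,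
      Fintype.sum_prod_type, hθ'ae]
    rw [Fintype.sum_eq_single a (fun b hb => Finset.sum_eq_zero fun f _ => by
      simp [Gmat, if_neg (Ne.symm hb)])]
    refine Finset.sum_congr rfl fun f _ => ?_
    simp [Gmat, mul_comm, mul_left_comm]
  have hGU : (Gmat U (A := A))ᴴ * Gmat U = 1 := Gmat_unitary U hUU
  set Ghat : Matrix (Fin n → A × E) (Fin n → A × E) ℂ := tensorPow (Gmat U (A := A)) n
    with hGhat
  have hGhatU : Ghatᴴ * Ghat = 1 := by
    rw [hGhat, tensorPow_conjTranspose, tensorPow_mul, hGU, tensorPow_one]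
  refine ⟨Ghat * ρhat * Ghatᴴ, ⟨hρhat.1.mul_mul_conjTranspose_same Ghat, ?_⟩, ?_, ?_, ?_⟩
  · rw [Matrix.trace_mul_cycle, hGhatU, Matrix.one_mul, hρhat.2]
  · rw [hGhat, ptraceE_Gmat_conj U hUU ρhat, hext]
  · exact PermInvariant.matmul (PermInvariant.matmul (tensorPow_permInvariant _ n) hperm)
      (PermInvariant.conjT (tensorPow_permInvariant _ n))
  · intro y hy
    obtain ⟨v, rfl⟩ := hy
    have h1 : (Ghat * ρhat * Ghatᴴ).mulVecLin v
        = Ghat.mulVecLin (ρhat.mulVecLin (Ghatᴴ *ᵥ v)) := by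
      simp [Matrix.mulVecLin_apply, Matrix.mulVec_mulVec, Matrix.mul_assoc]
    rw [h1]
    have h2 : ρhat.mulVecLin (Ghatᴴ *ᵥ v) ∈ Submodule.span ℂ (VSet n θ r) :=
      hrange (LinearMap.mem_range_self _ _)
    have h3 := Submodule.mem_map_of_mem (f := Ghat.mulVecLin) h2
    rw [Submodule.map_span] at h3
    refine Submodule.span_le.mpr ?_ h3
    rintro _ ⟨w, hw, rfl⟩
    have h4 := mulVec_tensorPow_mem_VSet (Gmat U (A := A)) hGθ hw (n := n)
    refine Submodule.subset_span ?_
    rw [Matrix.mulVecLin_apply, hGhat]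
    exact h4


end
end

section
/- For all natural numbers n, r, d with r ≤ n and d ≥ 1: ∑_{k=0}^{r} C(n, k)·(d − 1)^k ≤ C(n, r)·d^r, where C(a, b) denotes the binomial coefficient. -/
open BigOperators

/-- counting bound `∑_{k=0}^{r} C(n,k)·(d−1)^k ≤ C(n,r)·d^r`. -/
theorem choose_sum_le_choose_mul_pow
    (n r d : ℕ) (hr : r ≤ n) (hd : 1 ≤ d) :
    ∑ k ∈ Finset.range (r + 1), n.choose k * (d - 1) ^ k ≤ n.choose r * d ^ r := by
  have hdp : d = (d - 1) + 1 := (Nat.sub_add_cancel hd).symm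
  have hpow : d ^ r = ∑ k ∈ Finset.range (r + 1), r.choose k * (d - 1) ^ k := by
    conv_lhs => rw [hdp]
    rw [add_pow]
    apply Finset.sum_congr rfl
    intro k hk
    push_cast
    ring
  rw [hpow, Finset.mul_sum]
  apply Finset.sum_le_sum
  intro k hk
  have hkr : k ≤ r := Nat.lt_succ_iff.mp (Finset.mem_range.mp hk)
  have key : n.choose k ≤ n.choose r * r.choose k := by
    have := Nat.choose_mul (n := n) hkr
    calc n.choose k = n.choose k * 1 := (mul_one _).symm
      _ ≤ n.choose k * (n - k).choose (r - k) := by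
          exact Nat.mul_le_mul_left _ (Nat.one_le_iff_ne_zero.mpr
            (Nat.choose_pos (Nat.sub_le_sub_right hr k)).ne')
      _ = n.choose r * r.choose k := this.symm
  calc n.choose k * (d - 1) ^ k ≤ n.choose r * r.choose k * (d - 1) ^ k :=
        Nat.mul_le_mul_right _ key
    _ = n.choose r * (r.choose k * (d - 1) ^ k) := by ring
end
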